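/- arXiv:1610.03025 — 9 statements merged into one kernel-verified Lean document; each statement's English description precedes it below -/
import Mathlib

section
/- Let α ∈ (0,1), n ∈ ℕ, and z ∈ ℂ with Re(z) ≤ 0 and z ≠ 0. Then every complex root ξ₀ of the stability polynomial π(ξ; z) = (1 − z) ξ^{n+1} − Σ_{k=0}^{n} c^{n+1}_k ξ^k satisfies |ξ₀| < 1. -/
open scoped BigOperators

/-- The L1 coefficients `c^{n+1}_k` for the discrete Caputo derivative:
`c^{n+1}_0 = (n+1)^{1-α} - n^{1-α}` and, for `1 ≤ k ≤ n`,
`c^{n+1}_k = 2(n+1-k)^{1-α} - (n+2-k)^{1-α} - (n-k)^{1-α}`. -/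
noncomputable def caputoCoeff (α : ℝ) (n k : ℕ) : ℝ :=
  if k = 0 then ((n : ℝ) + 1) ^ (1 - α) - (n : ℝ) ^ (1 - α)
  else 2 * ((n : ℝ) + 1 - (k : ℝ)) ^ (1 - α) - ((n : ℝ) + 2 - (k : ℝ)) ^ (1 - α)
    - ((n : ℝ) - (k : ℝ)) ^ (1 - α)

lemma caputoCoeff_nonneg (α : ℝ) (hα : α ∈ Set.Ioo (0 : ℝ) 1) (n k : ℕ) (hk : k ≤ n) :
    0 ≤ caputoCoeff α n k := by
  obtain ⟨hα0, hα1⟩ := hα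
  have hs : (0:ℝ) < 1 - α := by linarith
  have hs1 : (1:ℝ) - α ≤ 1 := by linarith
  rcases Nat.eq_zero_or_pos k with rfl | hk0
  · have h0 : caputoCoeff α n 0 = ((n:ℝ) + 1) ^ (1 - α) - (n:ℝ) ^ (1 - α) := by
      norm_num [caputoCoeff]
    rw [h0, sub_nonneg]
    exact Real.rpow_le_rpow (Nat.cast_nonneg n)
      (by linarith [show (0:ℝ) ≤ (n:ℝ) from Nat.cast_nonneg n] : (n:ℝ) ≤ (n:ℝ) + 1) hs.le
  · have hkn : (k:ℝ) ≤ (n:ℝ) := by exact_mod_cast hk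
    have hx : ((n:ℝ) - k) ∈ Set.Ici (0:ℝ) := by simp; linarith
    have hy : ((n:ℝ) + 2 - k) ∈ Set.Ici (0:ℝ) := by simp; linarith
    have hcon := (Real.concaveOn_rpow hs.le hs1).2 hx hy
      (by norm_num : (0:ℝ) ≤ 1/2) (by norm_num : (0:ℝ) ≤ 1/2) (by norm_num)
    simp only [smul_eq_mul] at hcon
    have harg : (1/2:ℝ) * ((n:ℝ) - k) + (1/2:ℝ) * ((n:ℝ) + 2 - k) = (n:ℝ) + 1 - k := by ring
    rw [harg] at hcon
    simp only [caputoCoeff, if_neg (Nat.pos_iff_ne_zero.mp hk0)]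
    linarith

lemma caputoCoeff_sum (α : ℝ) (hα : α ∈ Set.Ioo (0 : ℝ) 1) (n : ℕ) :
    ∑ k ∈ Finset.range (n + 1), caputoCoeff α n k = 1 := by
  obtain ⟨hα0, hα1⟩ := hα
  have hs : (0:ℝ) < 1 - α := by linarith
  set d : ℕ → ℝ := fun k => ((n:ℝ) + 1 - k) ^ (1 - α) - ((n:ℝ) - k) ^ (1 - α) with hd
  have hstep : ∀ k : ℕ, caputoCoeff α n (k + 1) = d (k + 1) - d k := by
    intro k
    simp only [caputoCoeff, if_neg (Nat.succ_ne_zero k), hd]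
    push_cast
    have e1 : (n:ℝ) + 1 - ((k:ℝ) + 1) = (n:ℝ) - k := by ring
    have e2 : (n:ℝ) + 2 - ((k:ℝ) + 1) = (n:ℝ) + 1 - k := by ring
    rw [e1, e2]
    ring
  have h0 : caputoCoeff α n 0 = d 0 := by
    norm_num [caputoCoeff, hd]
  have hdn : d n = 1 := by
    have e1 : (n:ℝ) + 1 - (n:ℝ) = 1 := by ring
    have e2 : (n:ℝ) - (n:ℝ) = 0 := by ring
    simp only [hd, e1, e2, Real.one_rpow, Real.zero_rpow (ne_of_gt hs), sub_zero]
  rw [Finset.sum_range_succ']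
  have : ∑ i ∈ Finset.range n, caputoCoeff α n (i + 1)
      = ∑ i ∈ Finset.range n, (d (i + 1) - d i) :=
    Finset.sum_congr rfl fun i _ => hstep i
  rw [this, Finset.sum_range_sub, h0, hdn]
  ring

/-- if `Re z ≤ 0`, `z ≠ 0`, then every root of the stability polynomial
`π(ξ; z) = (1 - z) ξ^{n+1} - Σ_{k=0}^n c^{n+1}_k ξ^k` has modulus `< 1`. -/
theorem stability_root_abs_lt_one (α : ℝ) (hα : α ∈ Set.Ioo (0 : ℝ) 1) (n : ℕ)
    (z : ℂ) (hre : z.re ≤ 0) (hz : z ≠ 0) (ξ₀ : ℂ)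
    (hroot : (1 - z) * ξ₀ ^ (n + 1)
      - ∑ k ∈ Finset.range (n + 1), (caputoCoeff α n k : ℂ) * ξ₀ ^ k = 0) :
    ‖ξ₀‖ < 1 := by
  by_contra hcon
  push_neg at hcon
  set a := ‖ξ₀‖ with ha
  -- |1 - z| > 1
  have hnsq : 0 < Complex.normSq z := Complex.normSq_pos.mpr hz
  have h1z : 1 < ‖1 - z‖ := by
    have hsq : 0 < z.re * z.re + z.im * z.im := by
      rw [Complex.normSq_apply] at hnsq; exact hnsq
    have h1 : 1 < Complex.normSq (1 - z) := by
      rw [Complex.normSq_apply]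
      simp only [Complex.sub_re, Complex.sub_im, Complex.one_re, Complex.one_im]
      nlinarith
    have h2 : ‖1 - z‖ ^ 2 = Complex.normSq (1 - z) := Complex.sq_norm _
    nlinarith [norm_nonneg (1 - z)]
  -- key bound
  have heq : (1 - z) * ξ₀ ^ (n + 1)
      = ∑ k ∈ Finset.range (n + 1), (caputoCoeff α n k : ℂ) * ξ₀ ^ k := by
    linear_combination hroot
  have hbound : ‖1 - z‖ * a ^ (n + 1) ≤ a ^ n := by
    have h1 : ‖1 - z‖ * a ^ (n + 1)
        = ‖(1 - z) * ξ₀ ^ (n + 1)‖ := by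
      rw [norm_mul, norm_pow]
    rw [h1, heq]
    calc ‖∑ k ∈ Finset.range (n + 1), (caputoCoeff α n k : ℂ) * ξ₀ ^ k‖
        ≤ ∑ k ∈ Finset.range (n + 1), ‖(caputoCoeff α n k : ℂ) * ξ₀ ^ k‖ :=
          norm_sum_le _ _
      _ ≤ ∑ k ∈ Finset.range (n + 1), caputoCoeff α n k * a ^ n := by
          refine Finset.sum_le_sum fun k hk => ?_
          rw [norm_mul, norm_pow, Complex.norm_real, Real.norm_eq_abs]
          have hk' : k ≤ n := Nat.lt_succ_iff.mp (Finset.mem_range.mp hk)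
          have hc := caputoCoeff_nonneg α hα n k hk'
          have hle : a ^ k ≤ a ^ n := pow_le_pow_right₀ hcon hk'
          rw [abs_of_nonneg hc]
          nlinarith
      _ = a ^ n := by
          rw [← Finset.sum_mul, caputoCoeff_sum α hα n, one_mul]
  have han : 1 ≤ a ^ n := one_le_pow₀ hcon
  have hsp : a ^ (n + 1) = a ^ n * a := pow_succ a n
  rw [hsp] at hbound
  have hb0 : 0 < ‖1 - z‖ := lt_trans one_pos h1z
  have hPa : a ^ n ≤ a ^ n * a := by nlinarith [han, hcon]
  have step1 : ‖1 - z‖ * a ^ n ≤ ‖1 - z‖ * (a ^ n * a) := by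
    nlinarith [hPa, hb0]
  have step2 : a ^ n < ‖1 - z‖ * a ^ n := by nlinarith
  linarith
end

section
/- Let α ∈ (0,1) and n ∈ ℕ. Then every complex root ξ₀ of the polynomial π(ξ; 0) = ξ^{n+1} − Σ_{k=0}^{n} c^{n+1}_k ξ^k satisfies |ξ₀| ≤ 1. -/
open scoped BigOperators

/-- every root of `π(ξ; 0) = ξ^{n+1} - Σ_{k=0}^n c^{n+1}_k ξ^k`
has modulus `≤ 1`. -/
theorem zero_stability_root_abs_le_one (α : ℝ) (hα : α ∈ Set.Ioo (0 : ℝ) 1) (n : ℕ)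
    (ξ₀ : ℂ)
    (hroot : ξ₀ ^ (n + 1)
      - ∑ k ∈ Finset.range (n + 1), (caputoCoeff α n k : ℂ) * ξ₀ ^ k = 0) :
    ‖ξ₀‖ ≤ 1 := by
  by_contra h
  push_neg at h
  set r := ‖ξ₀‖ with hr
  have hr1 : 1 < r := h
  have hr0 : 0 < r := by linarith
  have heq : ξ₀ ^ (n + 1) = ∑ k ∈ Finset.range (n + 1), (caputoCoeff α n k : ℂ) * ξ₀ ^ k := by
    linear_combination hroot
  have habs : r ^ (n + 1) ≤ ∑ k ∈ Finset.range (n + 1), caputoCoeff α n k * r ^ k := by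
    calc r ^ (n + 1) = ‖ξ₀ ^ (n + 1)‖ := by rw [norm_pow]
      _ = ‖∑ k ∈ Finset.range (n + 1), (caputoCoeff α n k : ℂ) * ξ₀ ^ k‖ := by
          rw [heq]
      _ ≤ ∑ k ∈ Finset.range (n + 1), ‖(caputoCoeff α n k : ℂ) * ξ₀ ^ k‖ :=
          norm_sum_le _ _
      _ = ∑ k ∈ Finset.range (n + 1), caputoCoeff α n k * r ^ k := by
          refine Finset.sum_congr rfl fun k hk => ?_
          rw [norm_mul, norm_pow, Complex.norm_real, Real.norm_eq_abs,
            abs_of_nonneg (caputoCoeff_nonneg α hα n k (Nat.lt_succ_iff.mp (Finset.mem_range.mp hk)))]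
  have hle : ∑ k ∈ Finset.range (n + 1), caputoCoeff α n k * r ^ k ≤ r ^ n := by
    calc ∑ k ∈ Finset.range (n + 1), caputoCoeff α n k * r ^ k
        ≤ ∑ k ∈ Finset.range (n + 1), caputoCoeff α n k * r ^ n := by
          refine Finset.sum_le_sum fun k hk => ?_
          have hkn : k ≤ n := Nat.lt_succ_iff.mp (Finset.mem_range.mp hk)
          exact mul_le_mul_of_nonneg_left
            (pow_le_pow_right₀ hr1.le hkn)
            (caputoCoeff_nonneg α hα n k hkn)
      _ = r ^ n := by rw [← Finset.sum_mul, caputoCoeff_sum α hα n, one_mul]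
  have : r ^ (n + 1) ≤ r ^ n := habs.trans hle
  have hlt : r ^ n < r ^ (n + 1) := by
    calc r ^ n = r ^ n * 1 := (mul_one _).symm
      _ < r ^ n * r := by exact mul_lt_mul_of_pos_left hr1 (pow_pos hr0 n)
      _ = r ^ (n + 1) := by ring
  linarith
end

section
/- Let α ∈ (0,1) and n ∈ ℕ with n ≥ 1. Then ξ = 1 is a root of π(ξ; 0) = ξ^{n+1} − Σ_{k=0}^{n} c^{n+1}_k ξ^k, and its derivative at ξ = 1 satisfies (n+1) − Σ_{k=0}^{n} k · c^{n+1}_k > 1; in particular ξ = 1 is a simple root. -/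
open scoped BigOperators

section aux
variable (α : ℝ) (n : ℕ)

noncomputable def capD (k : ℕ) : ℝ :=
  ((n : ℝ) + 1 - (k : ℝ)) ^ (1 - α) - ((n : ℝ) - (k : ℝ)) ^ (1 - α)

lemma capD_succ_sub (k : ℕ) :
    caputoCoeff α n (k + 1) = capD α n (k + 1) - capD α n k := by
  simp only [caputoCoeff, capD, Nat.succ_ne_zero, if_false]
  push_cast
  ring_nf

lemma capD_n (hα : α < 1) : capD α n n = 1 := by
  simp [capD, Real.zero_rpow (by linarith : (1:ℝ) - α ≠ 0)]

lemma sum_caputo (hα : α < 1) :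
    ∑ k ∈ Finset.range (n + 1), caputoCoeff α n k = 1 := by
  rw [Finset.sum_range_succ' (fun k => caputoCoeff α n k) n]
  have h1 : ∑ i ∈ Finset.range n, caputoCoeff α n (i + 1)
      = capD α n n - capD α n 0 := by
    rw [← Finset.sum_range_sub (capD α n) n]
    exact Finset.sum_congr rfl fun k _ => capD_succ_sub α n k
  rw [h1, capD_n α n hα]
  simp [caputoCoeff, capD]

lemma sum_k_caputo (hα : α < 1) :
    ∑ k ∈ Finset.range (n + 1), (k : ℝ) * caputoCoeff α n k
      = (n : ℝ) + 1 - ((n : ℝ) + 1) ^ (1 - α) := by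
  rw [Finset.sum_range_succ' (fun k => (k : ℝ) * caputoCoeff α n k) n]
  have h2 : ∑ i ∈ Finset.range n, ((i + 1 : ℕ) : ℝ) * caputoCoeff α n (i + 1)
      = (((n : ℕ) : ℝ) * capD α n n - ((0 : ℕ) : ℝ) * capD α n 0)
        - ∑ i ∈ Finset.range n, capD α n i := by
    rw [← Finset.sum_range_sub (fun k => ((k : ℕ) : ℝ) * capD α n k) n,
      ← Finset.sum_sub_distrib]
    refine Finset.sum_congr rfl fun k _ => ?_
    rw [capD_succ_sub α n k]
    push_cast; ring
  have h3 : ∑ i ∈ Finset.range n, capD α n i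
      = ((n : ℝ) + 1) ^ (1 - α) - 1 := by
    have := Finset.sum_range_sub' (fun k : ℕ => ((n : ℝ) + 1 - (k : ℝ)) ^ (1 - α)) n
    have he : ∀ k, capD α n k
        = ((n : ℝ) + 1 - (k : ℝ)) ^ (1 - α) - ((n : ℝ) + 1 - ((k + 1 : ℕ) : ℝ)) ^ (1 - α) := by
      intro k; simp only [capD]; push_cast; ring_nf
    rw [Finset.sum_congr rfl fun k _ => he k, this]
    norm_num
  simp only [h2, capD_n α n hα, h3]
  push_cast
  ring

end aux

/-- `ξ = 1` is a root of `π(ξ;0) = ξ^{n+1} - Σ_{k=0}^n c^{n+1}_k ξ^k`,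
and the derivative at `ξ = 1`, namely `(n+1) - Σ_{k=0}^n k c^{n+1}_k`, is `> 1`;
in particular `ξ = 1` is a simple root. -/
theorem one_is_simple_root (α : ℝ) (hα : α ∈ Set.Ioo (0 : ℝ) 1) (n : ℕ) (hn : 1 ≤ n) :
    ((1 : ℂ) ^ (n + 1)
        - ∑ k ∈ Finset.range (n + 1), (caputoCoeff α n k : ℂ) * (1 : ℂ) ^ k = 0) ∧
    ((n : ℝ) + 1) - ∑ k ∈ Finset.range (n + 1), (k : ℝ) * caputoCoeff α n k > 1 := by
  obtain ⟨hα0, hα1⟩ := hα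
  constructor
  · have := sum_caputo α n hα1
    simp only [one_pow, mul_one]
    rw [← Complex.ofReal_sum]
    norm_num [this]
  · rw [sum_k_caputo α n hα1]
    have h2 : (1 : ℝ) < (n : ℝ) + 1 := by
      have : (1 : ℝ) ≤ (n : ℝ) := by exact_mod_cast hn
      linarith
    have h3 : (1:ℝ) < ((n : ℝ) + 1) ^ (1 - α) :=
      (Real.one_lt_rpow_iff_of_pos (by linarith)).mpr (Or.inl ⟨h2, by linarith⟩)
    linarith
end

section
/- Let α ∈ (0,1), n ∈ ℕ, and θ ∈ (0, 2π). Then Σ_{k=0}^{n} c^{n+1}_k e^{i(k−n−1)θ} ≠ 1. Consequently, no point e^{iθ} of the unit circle other than ξ = 1 is a root of the polynomial ξ^{n+1} − Σ_{k=0}^{n} c^{n+1}_k ξ^k. -/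
open scoped BigOperators

lemma caputo_pos (α : ℝ) (hα : α ∈ Set.Ioo (0:ℝ) 1) (n k : ℕ) (hk : k ≤ n) :
    0 < caputoCoeff α n k := by
  obtain ⟨hα0, hα1⟩ := hα
  have hs0 : 0 < 1 - α := by linarith
  have hs1 : 1 - α < 1 := by linarith
  rw [caputoCoeff]
  split_ifs with h
  · have := Real.rpow_lt_rpow (x := (n:ℝ)) (y := (n:ℝ)+1) (Nat.cast_nonneg n)
      (by linarith) hs0
    linarith
  · set x : ℝ := (n:ℝ) + 1 - k with hx
    have hk1 : 1 ≤ k := Nat.one_le_iff_ne_zero.2 h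
    have hx1 : 1 ≤ x := by
      have : (k:ℝ) ≤ n := by exact_mod_cast hk
      simp [hx]; linarith
    have hm1 : x - 1 ∈ Set.Ici (0:ℝ) := by simp; linarith
    have hm2 : x + 1 ∈ Set.Ici (0:ℝ) := by simp; linarith
    have hne : x - 1 ≠ x + 1 := by intro hxy; linarith [hxy]
    have ha : (0:ℝ) < 1/2 := by norm_num
    have hab : (1:ℝ)/2 + 1/2 = 1 := by norm_num
    have hc := (Real.strictConcaveOn_rpow hs0 hs1).2 hm1 hm2 hne ha ha hab
    simp only [smul_eq_mul] at hc
    have hmid : 1/2 * (x - 1) + 1/2 * (x + 1) = x := by ring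
    rw [hmid] at hc
    have e1 : (n:ℝ) + 2 - k = x + 1 := by rw [hx]; ring
    have e2 : (n:ℝ) - k = x - 1 := by rw [hx]; ring
    rw [e1, e2]
    linarith

lemma caputo_sum (α : ℝ) (hα : α ∈ Set.Ioo (0:ℝ) 1) (n : ℕ) :
    ∑ k ∈ Finset.range (n + 1), caputoCoeff α n k = 1 := by
  have hs0 : 0 < 1 - α := by linarith [hα.2]
  set g : ℕ → ℝ := fun k => ((n:ℝ) + 1 - k) ^ (1 - α) - ((n:ℝ) - k) ^ (1 - α) with hg
  have hstep : ∀ k, caputoCoeff α n (k + 1) = g (k + 1) - g k := by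
    intro k
    simp only [caputoCoeff, hg, Nat.succ_ne_zero, if_false]
    push_cast
    ring
  rw [Finset.sum_range_succ', Finset.sum_congr rfl (fun k _ => hstep k),
    Finset.sum_range_sub]
  have h0 : caputoCoeff α n 0 = g 0 := by simp [caputoCoeff, hg]
  have hgn : g n = 1 := by
    simp only [hg]
    rw [sub_self, Real.zero_rpow (by linarith : (1:ℝ) - α ≠ 0)]
    norm_num
  rw [h0, hgn]; ring

/-- for `θ ∈ (0, 2π)`, `Σ_{k=0}^n c^{n+1}_k e^{i(k-n-1)θ} ≠ 1`;
consequently `e^{iθ}` is not a root of `ξ^{n+1} - Σ_{k=0}^n c^{n+1}_k ξ^k`. -/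
theorem no_unit_root_off_one (α : ℝ) (hα : α ∈ Set.Ioo (0 : ℝ) 1) (n : ℕ)
    (θ : ℝ) (hθ : θ ∈ Set.Ioo (0 : ℝ) (2 * Real.pi)) :
    (∑ k ∈ Finset.range (n + 1), (caputoCoeff α n k : ℂ)
        * Complex.exp (Complex.I * ((((k : ℝ) - (n : ℝ) - 1) * θ : ℝ) : ℂ)) ≠ 1) ∧
    (Complex.exp (Complex.I * (θ : ℂ))) ^ (n + 1)
      - ∑ k ∈ Finset.range (n + 1), (caputoCoeff α n k : ℂ)
          * (Complex.exp (Complex.I * (θ : ℂ))) ^ k ≠ 0 := by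
  obtain ⟨hθ0, hθ2⟩ := hθ
  have hcos : Real.cos θ < 1 := by
    rcases lt_or_eq_of_le (Real.cos_le_one θ) with h | h
    · exact h
    · exfalso
      have := (Real.cos_eq_one_iff_of_lt_of_lt (by linarith [Real.pi_pos]) hθ2).1 h
      linarith
  have main : ∑ k ∈ Finset.range (n + 1), (caputoCoeff α n k : ℂ)
      * Complex.exp (Complex.I * ((((k : ℝ) - (n : ℝ) - 1) * θ : ℝ) : ℂ)) ≠ 1 := by
    intro hEq
    have hre := congrArg Complex.re hEq
    rw [Complex.re_sum] at hre
    simp only [Complex.one_re] at hre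
    have hterm : ∀ k : ℕ, ((caputoCoeff α n k : ℂ)
        * Complex.exp (Complex.I * ((((k : ℝ) - (n : ℝ) - 1) * θ : ℝ) : ℂ))).re
        = caputoCoeff α n k * Real.cos (((k:ℝ) - n - 1) * θ) := by
      intro k
      rw [mul_comm Complex.I]
      rw [Complex.mul_re, Complex.exp_ofReal_mul_I_re, Complex.exp_ofReal_mul_I_im]
      simp
    have hre' : ∑ k ∈ Finset.range (n + 1),
        caputoCoeff α n k * Real.cos (((k:ℝ) - n - 1) * θ) = 1 :=
      (Finset.sum_congr rfl fun k _ => (hterm k).symm).trans hre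
    have hlt : ∑ k ∈ Finset.range (n + 1),
        caputoCoeff α n k * Real.cos (((k:ℝ) - n - 1) * θ)
        < ∑ k ∈ Finset.range (n + 1), caputoCoeff α n k := by
      apply Finset.sum_lt_sum
      · intro k hk
        have hkn : k ≤ n := Nat.lt_succ_iff.1 (Finset.mem_range.1 hk)
        have hpos := caputo_pos α hα n k hkn
        nlinarith [Real.cos_le_one (((k:ℝ) - n - 1) * θ)]
      · refine ⟨n, Finset.self_mem_range_succ n, ?_⟩
        have hpos := caputo_pos α hα n n le_rfl
        have : ((n:ℝ) - n - 1) * θ = -θ := by ring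
        rw [this, Real.cos_neg]
        nlinarith
    rw [hre', caputo_sum α hα n] at hlt
    exact lt_irrefl 1 hlt
  refine ⟨main, ?_⟩
  intro hEq
  apply main
  have hξ : ∑ k ∈ Finset.range (n + 1), (caputoCoeff α n k : ℂ)
      * (Complex.exp (Complex.I * (θ : ℂ))) ^ k
      = (Complex.exp (Complex.I * (θ : ℂ))) ^ (n + 1) := by
    have := sub_eq_zero.1 hEq
    linear_combination -hEq
  have hne : Complex.exp (Complex.I * (θ : ℂ)) ^ (n+1) ≠ 0 :=
    pow_ne_zero _ (Complex.exp_ne_zero _)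
  calc ∑ k ∈ Finset.range (n + 1), (caputoCoeff α n k : ℂ)
        * Complex.exp (Complex.I * ((((k : ℝ) - (n : ℝ) - 1) * θ : ℝ) : ℂ))
      = (∑ k ∈ Finset.range (n + 1), (caputoCoeff α n k : ℂ)
        * (Complex.exp (Complex.I * (θ : ℂ))) ^ k)
        / (Complex.exp (Complex.I * (θ : ℂ))) ^ (n + 1) := by
        rw [Finset.sum_div]
        apply Finset.sum_congr rfl
        intro k _
        rw [mul_div_assoc]
        congr 1
        rw [← Complex.exp_nat_mul, ← Complex.exp_nat_mul, ← Complex.exp_sub]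
        congr 1
        push_cast
        ring
    _ = 1 := by rw [hξ, div_self hne]
end

section
/- Let α ∈ (0,1) and z ∈ ℂ with Re(z) ≤ 0. Suppose U : ℕ → ℂ satisfies the backward Euler recursion (1 − z) U^{n+1} = Σ_{k=0}^{n} c^{n+1}_k U^k for all n ∈ ℕ. Then |U^n| ≤ |U^0| for all n ∈ ℕ. -/
open scoped BigOperators

lemma caputo_midpoint {s a : ℝ} (hs0 : 0 < s) (hs1 : s < 1) (ha : 1 ≤ a) :
    (a + 1) ^ s + (a - 1) ^ s ≤ 2 * a ^ s := by
  have hc := (Real.concaveOn_rpow hs0.le hs1.le).2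
    (show a - 1 ∈ Set.Ici (0:ℝ) by simp; linarith)
    (show a + 1 ∈ Set.Ici (0:ℝ) by simp; linarith)
    (show (0:ℝ) ≤ 1/2 by norm_num) (show (0:ℝ) ≤ 1/2 by norm_num)
    (show (1/2:ℝ) + 1/2 = 1 by norm_num)
  simp only [smul_eq_mul] at hc
  have h2 : (1/2 : ℝ) * (a - 1) + (1/2 : ℝ) * (a + 1) = a := by ring
  rw [h2] at hc
  linarith

/-- if `Re z ≤ 0` and `U : ℕ → ℂ` satisfies the backward Euler recursion
`(1 - z) U^{n+1} = Σ_{k=0}^n c^{n+1}_k U^k` for all `n`, then `|U^n| ≤ |U^0|`. -/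
theorem backward_euler_stable (α : ℝ) (hα : α ∈ Set.Ioo (0 : ℝ) 1)
    (z : ℂ) (hre : z.re ≤ 0) (U : ℕ → ℂ)
    (hrec : ∀ n : ℕ, (1 - z) * U (n + 1)
      = ∑ k ∈ Finset.range (n + 1), (caputoCoeff α n k : ℂ) * U k) :
    ∀ n : ℕ, ‖U n‖ ≤ ‖U 0‖ := by
  have habs : 1 ≤ ‖1 - z‖ := by
    have h1 : (1 - z).re = 1 - z.re := by simp
    calc (1:ℝ) ≤ |(1 - z).re| := by rw [h1, abs_of_nonneg (by linarith)]; linarith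
    _ ≤ ‖1 - z‖ := Complex.abs_re_le_norm _
  intro n
  induction n using Nat.strong_induction_on with
  | _ n ih =>
    match n with
    | 0 => exact le_refl _
    | (m + 1) =>
      have h := congrArg norm (hrec m)
      rw [norm_mul] at h
      have hsumle : ‖∑ k ∈ Finset.range (m + 1), (caputoCoeff α m k : ℂ) * U k‖
          ≤ ‖U 0‖ := by
        calc ‖∑ k ∈ Finset.range (m + 1), (caputoCoeff α m k : ℂ) * U k‖
            ≤ ∑ k ∈ Finset.range (m + 1), ‖(caputoCoeff α m k : ℂ) * U k‖ :=
              norm_sum_le _ _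
          _ ≤ ∑ k ∈ Finset.range (m + 1), caputoCoeff α m k * ‖U 0‖ := by
              apply Finset.sum_le_sum
              intro k hk
              rw [norm_mul, Complex.norm_real, Real.norm_eq_abs]
              have hkm : k ≤ m := Nat.lt_succ_iff.mp (Finset.mem_range.mp hk)
              have hcnn := caputoCoeff_nonneg α hα m k hkm
              rw [abs_of_nonneg hcnn]
              exact mul_le_mul_of_nonneg_left (ih k (Nat.lt_succ_of_le hkm)) hcnn
          _ = ‖U 0‖ := by
              rw [← Finset.sum_mul, caputoCoeff_sum α hα m, one_mul]
      have : ‖U (m + 1)‖ ≤ ‖1 - z‖ * ‖U (m + 1)‖ :=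
        le_mul_of_one_le_left (by positivity) habs
      linarith [h ▸ hsumle]
end

section
/- Let α ∈ (0,1). There exists a constant C > 0 (depending only on α) such that for every τ > 0, every integer n ≥ 1, and every twice continuously differentiable function u : [0, nτ] → ℝ, letting t^k = kτ and M = max_{t ∈ [0, nτ]} |u''(t)|, one has | (1/Γ(1−α)) ∫_0^{t^n} (t^n − s)^{−α} u'(s) ds − (1/(Γ(2−α) τ^α)) ( u(t^n) − Σ_{k=0}^{n−1} c^{n}_k u(t^k) ) | ≤ C · M · τ^{2−α}. -/
open scoped BigOperators

open MeasureTheory intervalIntegral Set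

lemma abel_aux (g v : ℕ → ℝ) : ∀ n : ℕ,
    ∑ k ∈ Finset.range (n+1), (g k - g (k+1)) * (v (k+1) - v k)
    = (g n - g (n+1)) * v (n+1) - (g 0 - g 1) * v 0
      - ∑ k ∈ Finset.range n, (2 * g (k+1) - g k - g (k+2)) * v (k+1) := by
  intro n
  induction n with
  | zero => simp; ring
  | succ p ih =>
    rw [Finset.sum_range_succ, ih, Finset.sum_range_succ]
    ring

set_option maxHeartbeats 1000000 in
/-- consistency error of the L1 discretization of the Caputo derivative:
there is `C > 0` (depending only on `α`) such that for every `τ > 0`, `n ≥ 1` and every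
twice continuously differentiable `u` with `|u''| ≤ M` on `[0, nτ]`,
`| ∂_t^α u(t^n) - D_t^α u(t^n) | ≤ C M τ^{2-α}`, where `t^k = kτ`, `c^n_k = caputoCoeff α (n-1) k`. -/
theorem caputo_L1_consistency (α : ℝ) (hα : α ∈ Set.Ioo (0 : ℝ) 1) :
    ∃ C : ℝ, 0 < C ∧ ∀ τ : ℝ, 0 < τ → ∀ n : ℕ, 1 ≤ n → ∀ u : ℝ → ℝ, ContDiff ℝ 2 u →
      ∀ M : ℝ, (∀ t ∈ Set.Icc (0 : ℝ) ((n : ℝ) * τ), |deriv (deriv u) t| ≤ M) →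
      |(1 / Real.Gamma (1 - α))
          * (∫ s in (0 : ℝ)..((n : ℝ) * τ), ((n : ℝ) * τ - s) ^ (-α) * deriv u s)
        - (1 / (Real.Gamma (2 - α) * τ ^ α))
          * (u ((n : ℝ) * τ)
              - ∑ k ∈ Finset.range n, caputoCoeff α (n - 1) k * u ((k : ℝ) * τ))|
        ≤ C * M * τ ^ (2 - α) := by
  obtain ⟨hα0, hα1⟩ := hα
  have h1α : (0:ℝ) < 1 - α := by linarith
  have hΓpos : 0 < Real.Gamma (1 - α) := Real.Gamma_pos_of_pos h1α
  refine ⟨(1 / Real.Gamma (1 - α)) * (1 + 1 / (1 - α)), by positivity, ?_⟩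
  intro τ hτ n hn u hu M hM
  obtain ⟨m, rfl⟩ : ∃ m, n = m + 1 := ⟨n - 1, by omega⟩
  set n := m + 1 with hnm
  -- basic notation
  set T : ℝ := (n : ℝ) * τ with hT
  set t : ℕ → ℝ := fun k => (k : ℝ) * τ with ht
  have htT : t n = T := rfl
  have ht0 : t 0 = 0 := by simp [ht]
  have htmono : ∀ k : ℕ, t k < t (k+1) := by
    intro k; simp only [ht]; push_cast; nlinarith
  have htle : ∀ k : ℕ, k ≤ n → t k ≤ T := by
    intro k hk; simp only [ht, hT]
    have : (k:ℝ) ≤ (n:ℝ) := by exact_mod_cast hk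
    nlinarith
  have ht_nonneg : ∀ k : ℕ, 0 ≤ t k := by
    intro k; simp only [ht]; positivity
  have hTt : ∀ k : ℕ, T - t k = ((n:ℝ) - (k:ℝ)) * τ := by
    intro k; simp only [ht, hT]; ring
  have hTpos : ∀ k : ℕ, k < n → 0 < T - t k := by
    intro k hk; rw [hTt]
    have : (k:ℝ) < (n:ℝ) := by exact_mod_cast hk
    nlinarith
  -- regularity of u
  have hud : Differentiable ℝ u := hu.differentiable (by norm_num)
  have hu'd : Differentiable ℝ (deriv u) := by
    have hu2 : ContDiff ℝ ((1 : WithTop ℕ∞) + 1) u := by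
      rw [show ((1 : WithTop ℕ∞) + 1) = 2 by norm_num]; exact hu
    exact (contDiff_succ_iff_deriv.mp hu2).2.2.differentiable (by norm_num)
  have hu'c : Continuous (deriv u) := hu'd.continuous
  have hM0 : 0 ≤ M := le_trans (abs_nonneg _) (hM 0 ⟨le_refl _, by positivity⟩)
  -- Lipschitz bound for deriv u on [0, T]
  have hLip : ∀ x ∈ Icc (0:ℝ) T, ∀ y ∈ Icc (0:ℝ) T,
      |deriv u y - deriv u x| ≤ M * |y - x| := by
    intro x hx y hy
    have := (convex_Icc (0:ℝ) T).norm_image_sub_le_of_norm_deriv_le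
      (f := deriv u) (fun z _ => hu'd z) (fun z hz => by
        rw [Real.norm_eq_abs]; exact hM z hz) hx hy
    simpa [Real.norm_eq_abs] using this
  have hsub : ∀ k : ℕ, k < n → Icc (t k) (t (k+1)) ⊆ Icc (0:ℝ) T := by
    intro k hk
    exact Icc_subset_Icc (ht_nonneg k) (htle (k+1) (by omega))
  -- slopes
  set D : ℕ → ℝ := fun k => (u (t (k+1)) - u (t k)) / τ with hD
  have hslope : ∀ k : ℕ, k < n → ∀ s ∈ Icc (t k) (t (k+1)),
      |deriv u s - D k| ≤ M * τ := by
    intro k hk s hs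
    obtain ⟨ξ, hξmem, hξ⟩ := exists_hasDerivAt_eq_slope u (deriv u) (htmono k)
      (hud.continuous.continuousOn) (fun x _ => (hud x).hasDerivAt)
    have hstep : t (k+1) - t k = τ := by simp only [ht]; push_cast; ring
    have hDk : D k = deriv u ξ := by rw [hξ, hstep, hD]
    rw [hDk]
    have h1 := hLip ξ (hsub k hk (Ioo_subset_Icc_self hξmem)) s (hsub k hk hs)
    refine h1.trans ?_
    have : |s - ξ| ≤ τ := by
      rw [abs_le]
      constructor <;> [linarith [hs.1, hξmem.2, hstep]; linarith [hs.2, hξmem.1, hstep]]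
    nlinarith
  -- integrability of the kernel
  have hfint : ∀ a b : ℝ, IntervalIntegrable (fun s => (T - s) ^ (-α)) volume a b := by
    intro a b
    have h := (intervalIntegrable_rpow' (a := T - b) (b := T - a)
      (by linarith : (-1:ℝ) < -α)).comp_sub_left T
    simpa [sub_sub_cancel] using h.symm
  have hfu : ∀ k : ℕ, IntervalIntegrable (fun s => (T - s) ^ (-α) * deriv u s)
      volume (t k) (t (k+1)) :=
    fun k => (hfint _ _).mul_continuousOn hu'c.continuousOn
  -- kernel integral values
  have hJ : ∀ a b : ℝ, ∫ s in a..b, (T - s) ^ (-α)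
      = ((T - a) ^ (1-α) - (T - b) ^ (1-α)) / (1-α) := by
    intro a b
    rw [intervalIntegral.integral_comp_sub_left (fun x => x ^ (-α)) T,
      integral_rpow (Or.inl (by linarith)), show -α + 1 = 1 - α by ring]
  -- splitting of the integral
  have hsplit : ∫ s in (0:ℝ)..T, (T - s) ^ (-α) * deriv u s
      = ∑ k ∈ Finset.range n, ∫ s in t k..t (k+1), (T - s) ^ (-α) * deriv u s := by
    rw [← ht0, ← htT]
    exact (intervalIntegral.sum_integral_adjacent_intervals (fun k _ => hfu k)).symm
  -- per-interval error
  set E : ℕ → ℝ := fun k => ∫ s in t k..t (k+1), (T - s) ^ (-α) * (deriv u s - D k)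
    with hE
  have hEdef : ∀ k : ℕ, ∫ s in t k..t (k+1), (T - s) ^ (-α) * deriv u s
      = E k + D k * ∫ s in t k..t (k+1), (T - s) ^ (-α) := by
    intro k
    have h1 : E k = (∫ s in t k..t (k+1), (T - s) ^ (-α) * deriv u s)
        - ∫ s in t k..t (k+1), (T - s) ^ (-α) * D k := by
      simp only [hE, mul_sub]
      exact intervalIntegral.integral_sub (hfu k) ((hfint _ _).mul_const (D k))
    rw [h1, intervalIntegral.integral_mul_const]; ring
  -- the function g
  set g : ℕ → ℝ := fun k => ((n:ℝ) - (k:ℝ)) ^ (1-α) with hg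
  have hgτ : ∀ k : ℕ, k ≤ n → (T - t k) ^ (1-α) = g k * τ ^ (1-α) := by
    intro k hk
    rw [hTt, Real.mul_rpow (by exact_mod_cast sub_nonneg.mpr (show (k:ℝ) ≤ (n:ℝ) by
      exact_mod_cast hk)) hτ.le]
  -- discrete identity
  have hgm : g m = 1 := by
    rw [hg]
    push_cast [hnm]
    rw [show (m:ℝ) + 1 - (m:ℝ) = 1 by ring, Real.one_rpow]
  have hgm1 : g (m+1) = 0 := by
    rw [hg]
    push_cast [hnm]
    rw [show (m:ℝ) + 1 - ((m:ℝ) + 1) = 0 by ring,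
      Real.zero_rpow (by linarith : 1 - α ≠ 0)]
  have hdisc : u T - ∑ k ∈ Finset.range n, caputoCoeff α (n - 1) k * u (t k)
      = ∑ k ∈ Finset.range n, (g k - g (k+1)) * (u (t (k+1)) - u (t k)) := by
    have key := abel_aux g (fun k => u (t k)) m
    have hc0 : caputoCoeff α (n - 1) 0 = g 0 - g 1 := by
      rw [caputoCoeff, if_pos rfl]
      simp only [hg, hnm]
      push_cast
      ring_nf
    have hck : ∀ k : ℕ, caputoCoeff α (n - 1) (k+1)
        = 2 * g (k+1) - g k - g (k+2) := by
      intro k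
      rw [caputoCoeff, if_neg k.succ_ne_zero]
      simp only [hg, hnm]
      push_cast
      ring_nf
    have hsum0 : ∑ k ∈ Finset.range n, caputoCoeff α (n - 1) k * u (t k)
        = (∑ k ∈ Finset.range m, (2 * g (k+1) - g k - g (k+2)) * u (t (k+1)))
          + (g 0 - g 1) * u (t 0) := by
      rw [show Finset.range n = Finset.range (m+1) from rfl,
        Finset.sum_range_succ' (fun k => caputoCoeff α (n - 1) k * u (t k)) m]
      congr 1
      · exact Finset.sum_congr rfl fun k _ => by rw [hck]
      · rw [hc0]
    rw [hsum0, show (n : ℕ) = m + 1 from rfl, key, hgm, hgm1]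
    ring
  -- per-term identity between discrete weights and kernel integrals
  have hΓ2 : Real.Gamma (2 - α) = (1 - α) * Real.Gamma (1 - α) := by
    rw [show (2:ℝ) - α = (1 - α) + 1 by ring, Real.Gamma_add_one (ne_of_gt h1α)]
  have hτα : (0:ℝ) < τ ^ α := Real.rpow_pos_of_pos hτ α
  have hτ1α : τ ^ (1 - α) = τ / τ ^ α := by rw [Real.rpow_sub hτ, Real.rpow_one]
  have hΓne : Real.Gamma (1 - α) ≠ 0 := ne_of_gt hΓpos
  have hταne : τ ^ α ≠ 0 := ne_of_gt hτα
  have h1αne : (1:ℝ) - α ≠ 0 := ne_of_gt h1α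
  have hterm : ∀ k : ℕ, k < n →
      (1 / Real.Gamma (1 - α)) * (D k * ∫ s in t k..t (k+1), (T - s) ^ (-α))
      = (1 / (Real.Gamma (2 - α) * τ ^ α))
          * ((g k - g (k+1)) * (u (t (k+1)) - u (t k))) := by
    intro k hk
    rw [hJ, hgτ k hk.le, hgτ (k+1) hk, hΓ2, hτ1α, hD]
    field_simp
  -- key identity: the error equals the sum of per-interval errors
  have hkey : (1 / Real.Gamma (1 - α)) * (∫ s in (0:ℝ)..T, (T - s) ^ (-α) * deriv u s)
      - (1 / (Real.Gamma (2 - α) * τ ^ α))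
          * (u T - ∑ k ∈ Finset.range n, caputoCoeff α (n - 1) k * u (t k))
      = (1 / Real.Gamma (1 - α)) * ∑ k ∈ Finset.range n, E k := by
    rw [hsplit, hdisc, Finset.mul_sum, Finset.mul_sum, Finset.mul_sum,
      ← Finset.sum_sub_distrib]
    refine Finset.sum_congr rfl fun k hk => ?_
    rw [hEdef k, ← hterm k (Finset.mem_range.mp hk)]
    ring
  -- bound on inner intervals via integration by parts
  have hinner : ∀ k : ℕ, k + 1 < n →
      |E k| ≤ M * τ * τ * ((T - t (k+1)) ^ (-α) - (T - t k) ^ (-α)) := by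
    intro k hk
    have hk' : k < n := by omega
    have hTk1 : 0 < T - t (k+1) := hTpos _ hk
    have hTk : 0 < T - t k := hTpos _ hk'
    have hstep : t (k+1) - t k = τ := by simp only [ht]; push_cast; ring
    set e : ℝ → ℝ := fun s => u s - u (t k) - D k * (s - t k) with he
    have he' : ∀ x : ℝ, HasDerivAt e (deriv u x - D k) x := by
      intro x
      have h1 : HasDerivAt (fun s => u s - u (t k)) (deriv u x) x :=
        (hud x).hasDerivAt.sub_const _
      have h2 : HasDerivAt (fun s : ℝ => D k * (s - t k)) (D k) x := by
        simpa using ((hasDerivAt_id x).sub_const (t k)).const_mul (D k)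
      exact h1.sub h2
    have hek : e (t k) = 0 := by simp [he]
    have hek1 : e (t (k+1)) = 0 := by
      simp only [he, hD, hstep]
      field_simp
      ring
    have hebound : ∀ s ∈ Icc (t k) (t (k+1)), |e s| ≤ M * τ * τ := by
      intro s hs
      have hb := norm_image_sub_le_of_norm_deriv_le_segment'
        (f := e) (f' := fun s => deriv u s - D k) (C := M * τ)
        (fun x hx => (he' x).hasDerivWithinAt)
        (fun x hx => by
          rw [Real.norm_eq_abs]; exact hslope k hk' x (Ico_subset_Icc_self hx)) s hs
      rw [hek, sub_zero, Real.norm_eq_abs] at hb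
      refine hb.trans ?_
      have h1 : s - t k ≤ τ := by linarith [hs.2]
      nlinarith [hs.1, mul_nonneg hM0 hτ.le]
    have hker : ∀ x ∈ uIcc (t k) (t (k+1)),
        HasDerivAt (fun s => (T - s) ^ (-α)) (α * (T - x) ^ (-α - 1)) x := by
      intro x hx
      rw [uIcc_of_le (htmono k).le] at hx
      have hxpos : 0 < T - x := by linarith [hx.2]
      have hd : HasDerivAt (fun s : ℝ => T - s) (-1) x := (hasDerivAt_id x).const_sub T
      have hr := (Real.hasDerivAt_rpow_const (x := T - x) (p := -α)
        (Or.inl (ne_of_gt hxpos))).comp x hd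
      refine hr.congr_deriv ?_
      ring
    have hcont : ContinuousOn (fun s : ℝ => α * (T - s) ^ (-α - 1))
        (uIcc (t k) (t (k+1))) := by
      refine continuousOn_const.mul (ContinuousOn.rpow_const
        (continuous_const.sub continuous_id).continuousOn fun x hx => Or.inl ?_)
      rw [uIcc_of_le (htmono k).le] at hx
      exact ne_of_gt (by linarith [hx.2])
    have hibp := intervalIntegral.integral_mul_deriv_eq_deriv_mul
      (u := fun s => (T - s) ^ (-α)) (v := e)
      (u' := fun s => α * (T - s) ^ (-α - 1)) (v' := fun s => deriv u s - D k)
      hker (fun x _ => he' x) hcont.intervalIntegrable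
      ((hu'c.sub continuous_const).intervalIntegrable _ _)
    rw [hek, hek1, mul_zero, mul_zero, sub_zero, zero_sub] at hibp
    have hE' : E k = -∫ s in t k..t (k+1), (α * (T - s) ^ (-α - 1)) * e s := hibp
    rw [hE', abs_neg]
    have hbint : IntervalIntegrable
        (fun s => (M * τ * τ) * (α * (T - s) ^ (-α - 1))) volume (t k) (t (k+1)) :=
      hcont.intervalIntegrable.const_mul _
    have hae : ∀ᵐ s ∂(volume.restrict (uIoc (t k) (t (k+1)))),
        ‖(α * (T - s) ^ (-α - 1)) * e s‖ ≤ (M * τ * τ) * (α * (T - s) ^ (-α - 1)) := by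
      filter_upwards [ae_restrict_mem measurableSet_uIoc] with s hs
      rw [uIoc_of_le (htmono k).le] at hs
      have hs' : s ∈ Icc (t k) (t (k+1)) := Ioc_subset_Icc_self hs
      have hker_nonneg : 0 ≤ α * (T - s) ^ (-α - 1) := by
        have : (0:ℝ) < T - s := by linarith [hs'.2]
        positivity
      rw [Real.norm_eq_abs, abs_mul, abs_of_nonneg hker_nonneg, mul_comm (M * τ * τ)]
      exact mul_le_mul_of_nonneg_left (hebound s hs') hker_nonneg
    have habs := intervalIntegral.norm_integral_le_of_norm_le (htmono k).le
      (by rw [uIoc_of_le (htmono k).le] at hae; exact (ae_restrict_iff' measurableSet_Ioc).mp hae) hbint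
    rw [Real.norm_eq_abs] at habs
    refine habs.trans ?_
    have hcomp : ∫ s in t k..t (k+1), (T - s) ^ (-α - 1)
        = ((T - t k) ^ (-α) - (T - t (k+1)) ^ (-α)) / (-α) := by
      rw [intervalIntegral.integral_comp_sub_left (fun x => x ^ (-α - 1)) T,
        integral_rpow (Or.inr ⟨by intro hcon; linarith,
          notMem_uIcc_of_lt hTk1 hTk⟩), show -α - 1 + 1 = -α by ring]
    have hval : ∫ s in t k..t (k+1), (M * τ * τ) * (α * (T - s) ^ (-α - 1))
        = M * τ * τ * ((T - t (k+1)) ^ (-α) - (T - t k) ^ (-α)) := by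
      rw [intervalIntegral.integral_const_mul, intervalIntegral.integral_const_mul, hcomp]
      field_simp [ne_of_gt hα0]
      ring
    rw [hval]
  -- bound on the last interval
  have e1 : T - t m = τ := by rw [hTt]; push_cast [hnm]; ring
  have e2 : T - t (m+1) = 0 := by rw [hTt]; push_cast [hnm]; ring
  have hlast : |E m| ≤ M * τ * (τ ^ (1 - α) / (1 - α)) := by
    have hae : ∀ᵐ s ∂(volume.restrict (uIoc (t m) (t (m+1)))),
        ‖(T - s) ^ (-α) * (deriv u s - D m)‖ ≤ (M * τ) * (T - s) ^ (-α) := by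
      filter_upwards [ae_restrict_mem measurableSet_uIoc] with s hs
      rw [uIoc_of_le (htmono m).le] at hs
      have hs' : s ∈ Icc (t m) (t (m+1)) := Ioc_subset_Icc_self hs
      have hker_nonneg : 0 ≤ (T - s) ^ (-α) := by
        have : 0 ≤ T - s := by
          have := hs'.2
          have h2 : t (m+1) = T := by
            have := e2; linarith
          linarith
        positivity
      rw [Real.norm_eq_abs, abs_mul, abs_of_nonneg hker_nonneg, mul_comm (M * τ)]
      exact mul_le_mul_of_nonneg_left (hslope m (by omega) s hs') hker_nonneg
    have habs := intervalIntegral.norm_integral_le_of_norm_le (htmono m).le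
      (by rw [uIoc_of_le (htmono m).le] at hae; exact (ae_restrict_iff' measurableSet_Ioc).mp hae)
      ((hfint _ _).const_mul _)
    rw [Real.norm_eq_abs] at habs
    refine habs.trans ?_
    have hval2 : ∫ s in t m..t (m+1), (M * τ) * (T - s) ^ (-α)
        = M * τ * ((τ ^ (1 - α) - (0:ℝ) ^ (1 - α)) / (1 - α)) := by
      rw [intervalIntegral.integral_const_mul, hJ, e1, e2]
    rw [hval2, Real.zero_rpow h1αne, sub_zero]
  -- powers of τ
  have hττ : τ * τ * τ ^ (-α) = τ ^ ((2:ℝ) - α) := by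
    rw [show (2:ℝ) - α = 1 + (1 + -α) by ring, Real.rpow_add hτ, Real.rpow_add hτ,
      Real.rpow_one]
    ring
  have hττ2 : τ * τ ^ (1 - α) = τ ^ ((2:ℝ) - α) := by
    rw [show (2:ℝ) - α = 1 + (1 - α) by ring, Real.rpow_add hτ, Real.rpow_one]
  -- sum of the errors
  have hsum : |∑ k ∈ Finset.range n, E k|
      ≤ M * τ ^ ((2:ℝ) - α) + M * τ ^ ((2:ℝ) - α) / (1 - α) := by
    rw [show Finset.range n = Finset.range (m+1) from rfl, Finset.sum_range_succ]
    refine (abs_add_le _ _).trans ?_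
    have h1 : |∑ k ∈ Finset.range m, E k| ≤ M * τ ^ ((2:ℝ) - α) := by
      refine (Finset.abs_sum_le_sum_abs _ _).trans ?_
      have h2 : ∑ k ∈ Finset.range m, |E k|
          ≤ ∑ k ∈ Finset.range m,
            (M * τ * τ) * (((T - t (k+1)) ^ (-α)) - ((T - t k) ^ (-α))) := by
        refine Finset.sum_le_sum fun k hk => ?_
        have := hinner k (by have := Finset.mem_range.mp hk; omega)
        linarith [this]
      refine h2.trans ?_
      rw [← Finset.mul_sum, Finset.sum_range_sub (fun k => (T - t k) ^ (-α))]
      have h3 : (T - t m) ^ (-α) - (T - t 0) ^ (-α) ≤ τ ^ (-α) := by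
        rw [e1]
        have : 0 ≤ (T - t 0) ^ (-α) := Real.rpow_nonneg (by linarith [hTpos 0 (by omega)]) _
        linarith
      calc (M * τ * τ) * ((T - t m) ^ (-α) - (T - t 0) ^ (-α))
          ≤ (M * τ * τ) * τ ^ (-α) := by
            refine mul_le_mul_of_nonneg_left h3 (by positivity)
        _ = M * τ ^ ((2:ℝ) - α) := by rw [← hττ]; ring
    have h2 : |E m| ≤ M * τ ^ ((2:ℝ) - α) / (1 - α) := by
      refine hlast.trans ?_
      rw [← hττ2]
      exact le_of_eq (by ring)
    linarith
  -- conclusion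
  have hfold : ∀ k : ℕ, (k:ℝ) * τ = t k := fun _ => rfl
  simp only [hfold]
  rw [hkey, abs_mul, abs_of_nonneg (by positivity : (0:ℝ) ≤ 1 / Real.Gamma (1 - α))]
  calc (1 / Real.Gamma (1 - α)) * |∑ k ∈ Finset.range n, E k|
      ≤ (1 / Real.Gamma (1 - α))
          * (M * τ ^ ((2:ℝ) - α) + M * τ ^ ((2:ℝ) - α) / (1 - α)) := by
        exact mul_le_mul_of_nonneg_left hsum (by positivity)
    _ = (1 / Real.Gamma (1 - α)) * (1 + 1 / (1 - α)) * M * τ ^ ((2:ℝ) - α) := by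
        field_simp
end

section
/- Suppose (U^n) and (V^n) both solve the explicit upwind scheme (with the same f⁺, f⁻, δ) and the CFL condition holds with bounds L⁺, L⁻. Fix n ∈ ℕ and assume that for each 0 ≤ k ≤ n the sequence j ↦ |U^k_j − V^k_j| is summable over ℤ. Then j ↦ |U^{n+1}_j − V^{n+1}_j| is summable and Σ_{j∈ℤ} |U^{n+1}_j − V^{n+1}_j| ≤ Σ_{k=0}^{n} c^{n+1}_k Σ_{j∈ℤ} |U^k_j − V^k_j|. -/
open scoped BigOperators

/-- `U` solves the explicit upwind scheme with time steps indexed by `ℕ`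
and space indexed by `ℤ`. -/
def SolvesExplicitScheme (α δ : ℝ) (fp fm : ℝ → ℝ) (U : ℕ → ℤ → ℝ) : Prop :=
  ∀ (n : ℕ) (j : ℤ),
    U (n + 1) j = (∑ k ∈ Finset.range (n + 1), caputoCoeff α n k * U k j)
      - δ * (fp (U n j) - fp (U n (j - 1)))
      - δ * (fm (U n (j + 1)) - fm (U n j))

/-- The CFL condition with bounds `Lp, Lm`:
`(f⁺)' ≤ Lp`, `(f⁻)' ≥ -Lm` and `δ (Lp + Lm) ≤ 2 - 2^{1-α}`. -/
def CFLCondition (α δ Lp Lm : ℝ) (fp fm : ℝ → ℝ) : Prop :=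
  0 ≤ Lp ∧ 0 ≤ Lm ∧ (∀ x, deriv fp x ≤ Lp) ∧ (∀ x, -Lm ≤ deriv fm x) ∧
    δ * (Lp + Lm) ≤ 2 - (2 : ℝ) ^ (1 - α)

/-- Midpoint concavity inequality for `x ^ β`, `0 < β < 1`. -/
lemma rpow_concave_ineq (β x : ℝ) (hβ0 : 0 < β) (hβ1 : β < 1) (hx : 0 ≤ x) :
    (x + 2) ^ β + x ^ β ≤ 2 * (x + 1) ^ β := by
  have hc := (Real.strictConcaveOn_rpow hβ0 hβ1).concaveOn
  have h2 : (x + 2 : ℝ) ∈ Set.Ici (0 : ℝ) := by simp; linarith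
  have h0 : x ∈ Set.Ici (0 : ℝ) := hx
  have := hc.2 h0 h2 (by norm_num : (0:ℝ) ≤ 1/2) (by norm_num : (0:ℝ) ≤ 1/2)
    (by norm_num : (1/2 : ℝ) + 1/2 = 1)
  have he : (1/2 : ℝ) • x + (1/2 : ℝ) • (x + 2) = x + 1 := by
    simp [smul_eq_mul]; ring
  rw [he] at this
  simp only [smul_eq_mul] at this
  linarith

/-- Mean value theorem in product form, with derivative bounds. -/
lemma slope_exists (f : ℝ → ℝ) (hf : Differentiable ℝ f) (lo hi : ℝ)
    (hlo : ∀ x, lo ≤ deriv f x) (hhi : ∀ x, deriv f x ≤ hi) (u v : ℝ) :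
    ∃ a, lo ≤ a ∧ a ≤ hi ∧ f u - f v = a * (u - v) := by
  rcases lt_trichotomy v u with hlt | heq | hgt
  · obtain ⟨c, _, hc⟩ := exists_hasDerivAt_eq_slope f (deriv f) hlt
      hf.continuous.continuousOn (fun x _ => (hf x).hasDerivAt)
    refine ⟨deriv f c, hlo c, hhi c, ?_⟩
    rw [hc, div_mul_cancel₀ _ (sub_ne_zero.2 hlt.ne')]
  · exact ⟨deriv f 0, hlo 0, hhi 0, by rw [heq]; ring⟩
  · obtain ⟨c, _, hc⟩ := exists_hasDerivAt_eq_slope f (deriv f) hgt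
      hf.continuous.continuousOn (fun x _ => (hf x).hasDerivAt)
    refine ⟨deriv f c, hlo c, hhi c, ?_⟩
    have h1 : f v - f u = deriv f c * (v - u) := by
      rw [hc, div_mul_cancel₀ _ (sub_ne_zero.2 hgt.ne')]
    linear_combination -h1

set_option maxHeartbeats 1000000 in
/-- one-step `ℓ¹` estimate for the explicit upwind scheme under the CFL
condition: `Σ_j |U^{n+1}_j - V^{n+1}_j| ≤ Σ_{k=0}^n c^{n+1}_k Σ_j |U^k_j - V^k_j|`. -/
theorem explicit_upwind_l1_step (α τ h : ℝ) (hα : α ∈ Set.Ioo (0 : ℝ) 1)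
    (hτ : 0 < τ) (hh : 0 < h) (δ : ℝ) (hδ : δ = τ ^ α / (h * Real.Gamma (2 - α)))
    (fp fm : ℝ → ℝ) (hfp : Differentiable ℝ fp) (hfm : Differentiable ℝ fm)
    (hfp' : ∀ x, 0 ≤ deriv fp x) (hfm' : ∀ x, deriv fm x ≤ 0)
    (U V : ℕ → ℤ → ℝ)
    (hU : SolvesExplicitScheme α δ fp fm U) (hV : SolvesExplicitScheme α δ fp fm V)
    (Lp Lm : ℝ) (hcfl : CFLCondition α δ Lp Lm fp fm)
    (n : ℕ) (hsum : ∀ k ≤ n, Summable (fun j : ℤ => |U k j - V k j|)) :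
    Summable (fun j : ℤ => |U (n + 1) j - V (n + 1) j|) ∧
    ∑' j : ℤ, |U (n + 1) j - V (n + 1) j|
      ≤ ∑ k ∈ Finset.range (n + 1), caputoCoeff α n k * ∑' j : ℤ, |U k j - V k j| := by
  obtain ⟨hα0, hα1⟩ := hα
  obtain ⟨hLp, hLm, hfple, hfmge, hcflb⟩ := hcfl
  have hβ0 : (0:ℝ) < 1 - α := by linarith
  have hβ1 : (1:ℝ) - α < 1 := by linarith
  have hδ0 : 0 < δ := by
    rw [hδ]
    have hΓ : 0 < Real.Gamma (2 - α) := Real.Gamma_pos_of_pos (by linarith)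
    have hτα : 0 < τ ^ α := Real.rpow_pos_of_pos hτ α
    positivity
  -- nonnegativity of coefficients
  have hc : ∀ k, k ≤ n → 0 ≤ caputoCoeff α n k := by
    intro k hk
    unfold caputoCoeff
    split_ifs with hk0
    · have : (n:ℝ) ^ (1-α) ≤ ((n:ℝ)+1) ^ (1-α) :=
        Real.rpow_le_rpow (Nat.cast_nonneg n) (by linarith) (by linarith)
      linarith
    · have hkn : (k:ℝ) ≤ n := Nat.cast_le.mpr hk
      have hx : (0:ℝ) ≤ (n:ℝ) - k := by linarith
      have hcon := rpow_concave_ineq (1-α) ((n:ℝ) - k) hβ0 hβ1 hx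
      have e1 : (n:ℝ) + 1 - (k:ℝ) = ((n:ℝ) - k) + 1 := by ring
      have e2 : (n:ℝ) + 2 - (k:ℝ) = ((n:ℝ) - k) + 2 := by ring
      rw [e1, e2]; linarith
  -- lower bound on the last coefficient
  have htwo : (1:ℝ) ≤ (2:ℝ) ^ (1-α) := by
    have := Real.rpow_le_rpow_of_exponent_le (by norm_num : (1:ℝ) ≤ 2) hβ0.le
    rwa [Real.rpow_zero] at this
  have hcn : 2 - (2:ℝ) ^ (1-α) ≤ caputoCoeff α n n := by
    rcases Nat.eq_zero_or_pos n with h0 | h1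
    · subst h0
      have : caputoCoeff α 0 0 = 1 := by
        unfold caputoCoeff
        rw [if_pos rfl]
        simp [Real.zero_rpow (by linarith : (1:ℝ) - α ≠ 0)]
      rw [this]; linarith
    · unfold caputoCoeff
      rw [if_neg (Nat.pos_iff_ne_zero.mp h1)]
      have e1 : (n:ℝ) + 1 - (n:ℝ) = 1 := by ring
      have e2 : (n:ℝ) + 2 - (n:ℝ) = 2 := by ring
      have e3 : (n:ℝ) - (n:ℝ) = 0 := by ring
      rw [e1, e2, e3, Real.one_rpow, Real.zero_rpow (by linarith : (1:ℝ) - α ≠ 0)]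
      linarith
  -- mean value slopes
  choose A hA0 hALp hAeq using fun j : ℤ =>
    slope_exists fp hfp 0 Lp hfp' hfple (U n j) (V n j)
  choose B hBLm hB0 hBeq using fun j : ℤ =>
    slope_exists fm hfm (-Lm) 0 hfmge hfm' (U n j) (V n j)
  set cn := caputoCoeff α n n with hcndef
  -- key identity for the difference
  have hkey : ∀ j : ℤ, U (n+1) j - V (n+1) j
      = (∑ k ∈ Finset.range (n+1), caputoCoeff α n k * (U k j - V k j))
        - δ * (A j * (U n j - V n j) - A (j-1) * (U n (j-1) - V n (j-1)))
        - δ * (B (j+1) * (U n (j+1) - V n (j+1)) - B j * (U n j - V n j)) := by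
    intro j
    have h1 := hU n j
    have h2 := hV n j
    have hsub : ∑ k ∈ Finset.range (n+1), caputoCoeff α n k * (U k j - V k j)
        = (∑ k ∈ Finset.range (n+1), caputoCoeff α n k * U k j)
          - ∑ k ∈ Finset.range (n+1), caputoCoeff α n k * V k j := by
      rw [← Finset.sum_sub_distrib]
      exact Finset.sum_congr rfl (fun k _ => by ring)
    linear_combination h1 - h2 - hsub - δ * hAeq j + δ * hAeq (j-1)
      - δ * hBeq (j+1) + δ * hBeq j
  -- nonnegativity of the central coefficient
  have hcoef : ∀ j : ℤ, 0 ≤ cn - δ * A j + δ * B j := by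
    intro j
    have h1 : A j - B j ≤ Lp + Lm := by
      have := hALp j; have := hBLm j; linarith
    have h2 : δ * (A j - B j) ≤ δ * (Lp + Lm) :=
      mul_le_mul_of_nonneg_left h1 hδ0.le
    have h3 : δ * (Lp + Lm) ≤ 2 - (2:ℝ) ^ (1-α) := hcflb
    nlinarith [hcn]
  -- pointwise bound
  have habs : ∀ j : ℤ, |U (n+1) j - V (n+1) j|
      ≤ (∑ k ∈ Finset.range n, caputoCoeff α n k * |U k j - V k j|)
        + (cn - δ * A j + δ * B j) * |U n j - V n j|
        + δ * A (j-1) * |U n (j-1) - V n (j-1)|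
        + (-(δ * B (j+1))) * |U n (j+1) - V n (j+1)| := by
    intro j
    have h4 : ∀ a b c d : ℝ, |a + b + c + d| ≤ |a| + |b| + |c| + |d| := by
      intro a b c d
      calc |a + b + c + d| ≤ |a + b + c| + |d| := abs_add_le _ _
        _ ≤ |a + b| + |c| + |d| := by linarith [abs_add_le (a+b) c]
        _ ≤ |a| + |b| + |c| + |d| := by linarith [abs_add_le a b]
    calc |U (n+1) j - V (n+1) j|
        = |(∑ k ∈ Finset.range n, caputoCoeff α n k * (U k j - V k j))
            + (cn - δ * A j + δ * B j) * (U n j - V n j)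
            + δ * A (j-1) * (U n (j-1) - V n (j-1))
            + (-(δ * B (j+1))) * (U n (j+1) - V n (j+1))| := by
          rw [hkey j]
          congr 1
          rw [Finset.sum_range_succ]
          ring
      _ ≤ |∑ k ∈ Finset.range n, caputoCoeff α n k * (U k j - V k j)|
            + |(cn - δ * A j + δ * B j) * (U n j - V n j)|
            + |δ * A (j-1) * (U n (j-1) - V n (j-1))|
            + |(-(δ * B (j+1))) * (U n (j+1) - V n (j+1))| := h4 _ _ _ _
      _ ≤ _ := by
          gcongr ?_ + ?_ + ?_ + ?_
          · refine (Finset.abs_sum_le_sum_abs _ _).trans (le_of_eq ?_)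
            refine Finset.sum_congr rfl (fun k hk => ?_)
            rw [abs_mul, abs_of_nonneg (hc k (Finset.mem_range.mp hk).le)]
          · rw [abs_mul, abs_of_nonneg (hcoef j)]
          · rw [abs_mul, abs_of_nonneg (mul_nonneg hδ0.le (hA0 _))]
          · rw [abs_mul, abs_of_nonneg (by nlinarith [hB0 (j+1)] : (0:ℝ) ≤ -(δ * B (j+1)))]
  -- summability pieces
  have hSn := hsum n le_rfl
  have hP : Summable (fun j : ℤ => (cn - δ * A j + δ * B j) * |U n j - V n j|) := by
    refine Summable.of_nonneg_of_le (fun j => mul_nonneg (hcoef j) (abs_nonneg _))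
      (fun j => ?_) (hSn.mul_left cn)
    refine mul_le_mul_of_nonneg_right ?_ (abs_nonneg _)
    have h1 : 0 ≤ δ * A j := mul_nonneg hδ0.le (hA0 j)
    have h2 : δ * B j ≤ 0 := mul_nonpos_of_nonneg_of_nonpos hδ0.le (hB0 j)
    linarith
  have hQ : Summable (fun j : ℤ => δ * A j * |U n j - V n j|) := by
    refine Summable.of_nonneg_of_le
      (fun j => mul_nonneg (mul_nonneg hδ0.le (hA0 j)) (abs_nonneg _))
      (fun j => ?_) (hSn.mul_left (δ * Lp))
    exact mul_le_mul_of_nonneg_right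
      (mul_le_mul_of_nonneg_left (hALp j) hδ0.le) (abs_nonneg _)
  have hR : Summable (fun j : ℤ => (-(δ * B j)) * |U n j - V n j|) := by
    refine Summable.of_nonneg_of_le
      (fun j => mul_nonneg (by nlinarith [hB0 j] : (0:ℝ) ≤ -(δ * B j)) (abs_nonneg _))
      (fun j => ?_) (hSn.mul_left (δ * Lm))
    refine mul_le_mul_of_nonneg_right ?_ (abs_nonneg _)
    have := hBLm j
    nlinarith
  have hQshift : Summable (fun j : ℤ => δ * A (j-1) * |U n (j-1) - V n (j-1)|) :=
    ((Equiv.subRight (1:ℤ)).summable_iff).2 hQ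
  have hRshift : Summable (fun j : ℤ => (-(δ * B (j+1))) * |U n (j+1) - V n (j+1)|) :=
    ((Equiv.addRight (1:ℤ)).summable_iff).2 hR
  have hSsum : Summable (fun j : ℤ =>
      ∑ k ∈ Finset.range n, caputoCoeff α n k * |U k j - V k j|) :=
    summable_sum (fun k hk => (hsum k (Finset.mem_range.mp hk).le).mul_left _)
  have hBound : Summable (fun j : ℤ =>
      (∑ k ∈ Finset.range n, caputoCoeff α n k * |U k j - V k j|)
        + (cn - δ * A j + δ * B j) * |U n j - V n j|
        + δ * A (j-1) * |U n (j-1) - V n (j-1)|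
        + (-(δ * B (j+1))) * |U n (j+1) - V n (j+1)|) :=
    ((hSsum.add hP).add hQshift).add hRshift
  have hLHS : Summable (fun j : ℤ => |U (n+1) j - V (n+1) j|) :=
    Summable.of_nonneg_of_le (fun j => abs_nonneg _) habs hBound
  refine ⟨hLHS, ?_⟩
  calc ∑' j : ℤ, |U (n+1) j - V (n+1) j|
      ≤ ∑' j : ℤ, ((∑ k ∈ Finset.range n, caputoCoeff α n k * |U k j - V k j|)
          + (cn - δ * A j + δ * B j) * |U n j - V n j|
          + δ * A (j-1) * |U n (j-1) - V n (j-1)|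
          + (-(δ * B (j+1))) * |U n (j+1) - V n (j+1)|) :=
        Summable.tsum_le_tsum habs hLHS hBound
    _ = (∑' j : ℤ, ∑ k ∈ Finset.range n, caputoCoeff α n k * |U k j - V k j|)
          + (∑' j : ℤ, (cn - δ * A j + δ * B j) * |U n j - V n j|)
          + (∑' j : ℤ, δ * A (j-1) * |U n (j-1) - V n (j-1)|)
          + (∑' j : ℤ, (-(δ * B (j+1))) * |U n (j+1) - V n (j+1)|) := by
        rw [Summable.tsum_add ((hSsum.add hP).add hQshift) hRshift,
          Summable.tsum_add (hSsum.add hP) hQshift, Summable.tsum_add hSsum hP]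
    _ = (∑ k ∈ Finset.range n, caputoCoeff α n k * ∑' j : ℤ, |U k j - V k j|)
          + ((∑' j : ℤ, (cn - δ * A j + δ * B j) * |U n j - V n j|)
            + (∑' j : ℤ, δ * A j * |U n j - V n j|)
            + (∑' j : ℤ, (-(δ * B j)) * |U n j - V n j|)) := by
        rw [Summable.tsum_finsetSum (fun k hk => (hsum k (Finset.mem_range.mp hk).le).mul_left _)]
        have e1 : (∑' j : ℤ, δ * A (j-1) * |U n (j-1) - V n (j-1)|)
            = ∑' j : ℤ, δ * A j * |U n j - V n j| :=
          (Equiv.subRight (1:ℤ)).tsum_eq (fun j => δ * A j * |U n j - V n j|)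
        have e2 : (∑' j : ℤ, (-(δ * B (j+1))) * |U n (j+1) - V n (j+1)|)
            = ∑' j : ℤ, (-(δ * B j)) * |U n j - V n j| :=
          (Equiv.addRight (1:ℤ)).tsum_eq (fun j => (-(δ * B j)) * |U n j - V n j|)
        rw [e1, e2]
        have e3 : ∀ k ∈ Finset.range n,
            (∑' j : ℤ, caputoCoeff α n k * |U k j - V k j|)
              = caputoCoeff α n k * ∑' j : ℤ, |U k j - V k j| :=
          fun k _ => tsum_mul_left
        rw [Finset.sum_congr rfl e3]
        ring
    _ = (∑ k ∈ Finset.range n, caputoCoeff α n k * ∑' j : ℤ, |U k j - V k j|)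
          + cn * ∑' j : ℤ, |U n j - V n j| := by
        congr 1
        rw [← Summable.tsum_add hP hQ, ← Summable.tsum_add (hP.add hQ) hR, ← tsum_mul_left]
        exact tsum_congr (fun j => by ring)
    _ = ∑ k ∈ Finset.range (n+1), caputoCoeff α n k * ∑' j : ℤ, |U k j - V k j| := by
        rw [Finset.sum_range_succ]
end

section
/- Suppose (U^n) solves the explicit upwind scheme and the CFL condition holds with bounds L⁺, L⁻. Assume that for every n ∈ ℕ the sequence j ↦ |U^n_{j+1} − U^n_j| is summable over ℤ. Then the scheme is total-variation diminishing: for every n ∈ ℕ, TV[U^n] = Σ_{j∈ℤ} |U^n_{j+1} − U^n_j| ≤ Σ_{j∈ℤ} |U^0_{j+1} − U^0_j| = TV[U^0]. -/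
open scoped BigOperators

lemma concave_ineq_aux {p : ℝ} (hp0 : 0 < p) (hp1 : p < 1) {x : ℝ} (hx : 1 ≤ x) :
    (x+1)^p + (x-1)^p ≤ 2 * x^p := by
  have h := (Real.concaveOn_rpow hp0.le hp1.le).2
    (Set.mem_Ici.2 (by linarith : (0:ℝ) ≤ x-1))
    (Set.mem_Ici.2 (by linarith : (0:ℝ) ≤ x+1))
    (by norm_num : (0:ℝ) ≤ 1/2) (by norm_num : (0:ℝ) ≤ 1/2) (by norm_num)
  simp only [smul_eq_mul] at h
  rw [show (1/2 : ℝ) * (x-1) + (1/2 : ℝ) * (x+1) = x by ring] at h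
  linarith

lemma slope_exists_aux {F : ℝ → ℝ} {L : ℝ} (hL : 0 ≤ L) (h1 : Monotone F)
    (h2 : Monotone fun x => L * x - F x) (x y : ℝ) :
    ∃ a : ℝ, 0 ≤ a ∧ a ≤ L ∧ F y - F x = a * (y - x) := by
  rcases eq_or_ne y x with rfl | hne
  · exact ⟨0, le_rfl, hL, by ring⟩
  have key : F y - F x = (F y - F x) / (y - x) * (y - x) :=
    (div_mul_cancel₀ _ (sub_ne_zero.2 hne)).symm
  rcases hne.lt_or_gt with hlt | hlt
  · have hm : F y ≤ F x := h1 hlt.le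
    have hc : L * y - F y ≤ L * x - F x := h2 hlt.le
    refine ⟨(F y - F x) / (y - x), ?_, ?_, key⟩
    · exact div_nonneg_of_nonpos (by linarith) (by linarith)
    · rw [div_le_iff_of_neg (by linarith : y - x < 0)]
      nlinarith
  · have hm : F x ≤ F y := h1 hlt.le
    have hc : L * x - F x ≤ L * y - F y := h2 hlt.le
    refine ⟨(F y - F x) / (y - x), ?_, ?_, key⟩
    · exact div_nonneg (by linarith) (by linarith)
    · rw [div_le_iff₀ (by linarith : (0:ℝ) < y - x)]
      nlinarith

lemma caputo_nonneg_aux {α : ℝ} (hα0 : 0 < α) (hα1 : α < 1) {n k : ℕ} (hk : k ≤ n) :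
    0 ≤ caputoCoeff α n k := by
  have hp0 : 0 < 1 - α := by linarith
  rcases Nat.eq_zero_or_pos k with rfl | hk1
  · rw [caputoCoeff, if_pos rfl]
    have := Real.rpow_le_rpow (n.cast_nonneg) (by linarith : (n:ℝ) ≤ (n:ℝ)+1) hp0.le
    linarith
  · rw [caputoCoeff, if_neg hk1.ne']
    have hkn : (k:ℝ) ≤ (n:ℝ) := Nat.cast_le.2 hk
    have hx : 1 ≤ (n:ℝ) + 1 - (k:ℝ) := by linarith
    have h := concave_ineq_aux hp0 (by linarith) hx
    rw [show (n:ℝ) + 1 - k + 1 = (n:ℝ) + 2 - k by ring,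
      show (n:ℝ) + 1 - k - 1 = (n:ℝ) - k by ring] at h
    linarith

lemma two_rpow_bounds_aux {α : ℝ} (hα0 : 0 < α) (hα1 : α < 1) :
    1 ≤ (2:ℝ) ^ (1 - α) ∧ (2:ℝ) ^ (1 - α) ≤ 2 := by
  constructor
  · simpa using Real.rpow_le_rpow_of_exponent_le one_le_two (by linarith : (0:ℝ) ≤ 1 - α)
  · have := Real.rpow_le_rpow_of_exponent_le one_le_two (by linarith : 1 - α ≤ 1)
    simpa using this

lemma caputo_last_ge_aux {α : ℝ} (hα0 : 0 < α) (hα1 : α < 1) (n : ℕ) :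
    2 - (2:ℝ) ^ (1 - α) ≤ caputoCoeff α n n := by
  have hp0 : 0 < 1 - α := by linarith
  obtain ⟨h2p, -⟩ := two_rpow_bounds_aux hα0 hα1
  cases n with
  | zero =>
    rw [caputoCoeff, if_pos rfl]
    simp only [Nat.cast_zero, zero_add, Real.one_rpow, Real.zero_rpow hp0.ne']
    linarith
  | succ m =>
    rw [caputoCoeff, if_neg (Nat.succ_ne_zero m)]
    push_cast
    rw [show (m:ℝ) + 1 + 1 - ((m:ℝ) + 1) = 1 by ring,
      show (m:ℝ) + 1 + 2 - ((m:ℝ) + 1) = 2 by ring,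
      show (m:ℝ) + 1 - ((m:ℝ) + 1) = 0 by ring,
      Real.one_rpow, Real.zero_rpow hp0.ne']
    linarith

lemma caputo_sum_aux {α : ℝ} (hα1 : α < 1) (n : ℕ) :
    ∑ k ∈ Finset.range (n+1), caputoCoeff α n k = 1 := by
  have hp0 : 0 < 1 - α := by linarith
  set B : ℕ → ℝ := fun k => ((n:ℝ) + 1 - (k:ℝ)) ^ (1-α) - ((n:ℝ) - (k:ℝ)) ^ (1-α) with hB
  have hstep : ∀ i ∈ Finset.range n, caputoCoeff α n (i+1) = B (i+1) - B i := by
    intro i hi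
    rw [caputoCoeff, if_neg (Nat.succ_ne_zero i), hB]
    push_cast
    rw [show (n:ℝ) + 2 - ((i:ℝ)+1) = (n:ℝ) + 1 - i by ring,
      show (n:ℝ) - ((i:ℝ)+1) = (n:ℝ) + 1 - ((i:ℝ)+1+1) by ring]
    ring_nf
  rw [Finset.sum_range_succ', Finset.sum_congr rfl hstep, Finset.sum_range_sub]
  rw [caputoCoeff, if_pos rfl, hB]
  simp only [Nat.cast_zero, sub_zero]
  rw [show (n:ℝ) + 1 - (n:ℝ) = 1 by ring, sub_self, Real.one_rpow,
    Real.zero_rpow hp0.ne']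
  ring

/-- the explicit upwind scheme is TVD under the CFL condition:
`TV[U^n] ≤ TV[U^0]` for every `n`. -/
theorem explicit_upwind_tvd (α τ h : ℝ) (hα : α ∈ Set.Ioo (0 : ℝ) 1)
    (hτ : 0 < τ) (hh : 0 < h) (δ : ℝ) (hδ : δ = τ ^ α / (h * Real.Gamma (2 - α)))
    (fp fm : ℝ → ℝ) (hfp : Differentiable ℝ fp) (hfm : Differentiable ℝ fm)
    (hfp' : ∀ x, 0 ≤ deriv fp x) (hfm' : ∀ x, deriv fm x ≤ 0)
    (U : ℕ → ℤ → ℝ) (hU : SolvesExplicitScheme α δ fp fm U)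
    (Lp Lm : ℝ) (hcfl : CFLCondition α δ Lp Lm fp fm)
    (hsum : ∀ n : ℕ, Summable (fun j : ℤ => |U n (j + 1) - U n j|)) :
    ∀ n : ℕ, ∑' j : ℤ, |U n (j + 1) - U n j| ≤ ∑' j : ℤ, |U 0 (j + 1) - U 0 j| := by
  obtain ⟨hα0, hα1⟩ := hα
  obtain ⟨hLp, hLm, hfp'le, hfm'ge, hcfl'⟩ := hcfl
  have hδ0 : 0 ≤ δ := by
    rw [hδ]
    exact div_nonneg (Real.rpow_nonneg hτ.le α)
      (mul_nonneg hh.le (Real.Gamma_pos_of_pos (by linarith)).le)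
  -- monotone functions
  have hfpm : Monotone fp := monotone_of_deriv_nonneg hfp hfp'
  have hfpL : Monotone fun x => Lp * x - fp x := by
    apply monotone_of_deriv_nonneg ((differentiable_fun_id.const_mul Lp).sub hfp)
    intro x
    rw [deriv_sub (by fun_prop) (hfp x), deriv_const_mul Lp differentiableAt_fun_id]
    simp only [deriv_id'']
    have := hfp'le x; linarith
  have hfmm : Monotone fun x => -fm x := by
    apply monotone_of_deriv_nonneg hfm.neg
    intro x
    rw [deriv.neg]
    have := hfm' x; linarith
  have hfmL : Monotone fun x : ℝ => Lm * x - -fm x := by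
    apply monotone_of_deriv_nonneg ((differentiable_fun_id.const_mul Lm).sub hfm.neg)
    intro x
    rw [deriv_sub (by fun_prop) (hfm.neg x), deriv.neg,
      deriv_const_mul Lm differentiableAt_fun_id]
    simp only [deriv_id'']
    have := hfm'ge x; linarith
  choose a ha0 haL haeq using fun x y => slope_exists_aux hLp hfpm hfpL x y
  choose s hs0 hsL hseq using fun x y => slope_exists_aux hLm hfmm hfmL x y
  -- key step estimate
  have key : ∀ n : ℕ, (∑' j : ℤ, |U (n+1) (j+1) - U (n+1) j|)
      ≤ ∑ k ∈ Finset.range (n+1),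
          caputoCoeff α n k * ∑' j : ℤ, |U k (j+1) - U k j| := by
    intro n
    set u : ℤ → ℝ := fun j =>
      (caputoCoeff α n n - δ * a (U n j) (U n (j+1)) - δ * s (U n j) (U n (j+1)))
        * |U n (j+1) - U n j| with hu
    set v : ℤ → ℝ := fun j => δ * a (U n j) (U n (j+1)) * |U n (j+1) - U n j| with hv
    set w : ℤ → ℝ := fun j => δ * s (U n j) (U n (j+1)) * |U n (j+1) - U n j| with hw
    have hmid : ∀ j : ℤ, 0 ≤ caputoCoeff α n n
        - δ * a (U n j) (U n (j+1)) - δ * s (U n j) (U n (j+1)) := by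
      intro j
      have h1 : δ * a (U n j) (U n (j+1)) ≤ δ * Lp :=
        mul_le_mul_of_nonneg_left (haL _ _) hδ0
      have h2 : δ * s (U n j) (U n (j+1)) ≤ δ * Lm :=
        mul_le_mul_of_nonneg_left (hsL _ _) hδ0
      have h3 := caputo_last_ge_aux hα0 hα1 n
      have e : δ * Lp + δ * Lm = δ * (Lp + Lm) := by ring
      linarith
    -- the difference recurrence
    have hrec : ∀ j : ℤ, U (n+1) (j+1) - U (n+1) j
        = (∑ k ∈ Finset.range n, caputoCoeff α n k * (U k (j+1) - U k j))
          + (caputoCoeff α n n - δ * a (U n j) (U n (j+1)) - δ * s (U n j) (U n (j+1)))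
              * (U n (j+1) - U n j)
          + δ * a (U n (j-1)) (U n (j-1+1)) * (U n (j-1+1) - U n (j-1))
          + δ * s (U n (j+1)) (U n (j+1+1)) * (U n (j+1+1) - U n (j+1)) := by
      intro j
      have h1 := hU n (j+1)
      have h2 := hU n j
      rw [show j + 1 - 1 = j by ring] at h1
      have efp1 : fp (U n (j+1)) - fp (U n j)
          = a (U n j) (U n (j+1)) * (U n (j+1) - U n j) := haeq _ _
      have efp2 : fp (U n j) - fp (U n (j-1))
          = a (U n (j-1)) (U n (j-1+1)) * (U n (j-1+1) - U n (j-1)) := by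
        rw [show j - 1 + 1 = j by ring]; exact haeq _ _
      have efm1 : fm (U n (j+1)) - fm (U n j)
          = -(s (U n j) (U n (j+1)) * (U n (j+1) - U n j)) := by
        have := hseq (U n j) (U n (j+1)); linarith
      have efm2 : fm (U n (j+1+1)) - fm (U n (j+1))
          = -(s (U n (j+1)) (U n (j+1+1)) * (U n (j+1+1) - U n (j+1))) := by
        have := hseq (U n (j+1)) (U n (j+1+1)); linarith
      have esum : (∑ k ∈ Finset.range (n+1), caputoCoeff α n k * U k (j+1))
          - ∑ k ∈ Finset.range (n+1), caputoCoeff α n k * U k j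
          = (∑ k ∈ Finset.range n, caputoCoeff α n k * (U k (j+1) - U k j))
            + caputoCoeff α n n * (U n (j+1) - U n j) := by
        rw [← Finset.sum_sub_distrib, Finset.sum_range_succ]
        congr 1
        · exact Finset.sum_congr rfl fun k _ => by ring
        · ring
      rw [h1, h2]
      linear_combination esum - δ * efp1 + δ * efp2 + δ * efm1 - δ * efm2
    -- pointwise bound
    have hbound : ∀ j : ℤ, |U (n+1) (j+1) - U (n+1) j|
        ≤ (∑ k ∈ Finset.range n, caputoCoeff α n k * |U k (j+1) - U k j|)
          + u j + v (j-1) + w (j+1) := by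
      intro j
      rw [hrec j]
      have t1 : ∀ x1 x2 x3 x4 : ℝ, |x1 + x2 + x3 + x4| ≤ |x1| + |x2| + |x3| + |x4| := by
        intro x1 x2 x3 x4
        calc |x1 + x2 + x3 + x4| ≤ |x1 + x2 + x3| + |x4| := abs_add_le _ _
          _ ≤ (|x1 + x2| + |x3|) + |x4| := by gcongr; exact abs_add_le _ _
          _ ≤ ((|x1| + |x2|) + |x3|) + |x4| := by gcongr; exact abs_add_le _ _
      refine (t1 _ _ _ _).trans ?_
      gcongr
      · calc |∑ k ∈ Finset.range n, caputoCoeff α n k * (U k (j+1) - U k j)|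
            ≤ ∑ k ∈ Finset.range n, |caputoCoeff α n k * (U k (j+1) - U k j)| :=
              Finset.abs_sum_le_sum_abs _ _
          _ = ∑ k ∈ Finset.range n, caputoCoeff α n k * |U k (j+1) - U k j| := by
              refine Finset.sum_congr rfl fun k hk => ?_
              rw [abs_mul, abs_of_nonneg (caputo_nonneg_aux hα0 hα1
                (Finset.mem_range.1 hk).le)]
      · rw [hu, abs_mul, abs_of_nonneg (hmid j)]
      · rw [hv, abs_mul, abs_of_nonneg (mul_nonneg hδ0 (ha0 _ _))]
      · rw [hw, abs_mul, abs_of_nonneg (mul_nonneg hδ0 (hs0 _ _))]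
    -- summability
    have hsu : Summable u := by
      apply Summable.of_nonneg_of_le
        (fun j => mul_nonneg (hmid j) (abs_nonneg _))
        (fun j => ?_) ((hsum n).mul_left (caputoCoeff α n n))
      apply mul_le_mul_of_nonneg_right _ (abs_nonneg _)
      have h1 := mul_nonneg hδ0 (ha0 (U n j) (U n (j+1)))
      have h2 := mul_nonneg hδ0 (hs0 (U n j) (U n (j+1)))
      linarith
    have hsv : Summable v := by
      apply Summable.of_nonneg_of_le
        (fun j => mul_nonneg (mul_nonneg hδ0 (ha0 _ _)) (abs_nonneg _))
        (fun j => ?_) ((hsum n).mul_left (δ * Lp))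
      exact mul_le_mul_of_nonneg_right
        (mul_le_mul_of_nonneg_left (haL _ _) hδ0) (abs_nonneg _)
    have hsw : Summable w := by
      apply Summable.of_nonneg_of_le
        (fun j => mul_nonneg (mul_nonneg hδ0 (hs0 _ _)) (abs_nonneg _))
        (fun j => ?_) ((hsum n).mul_left (δ * Lm))
      exact mul_le_mul_of_nonneg_right
        (mul_le_mul_of_nonneg_left (hsL _ _) hδ0) (abs_nonneg _)
    have hsv' : Summable fun j : ℤ => v (j - 1) := by
      have hi : Function.Injective fun j : ℤ => j - 1 := fun x y hxy => by simpa using hxy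
      exact hsv.comp_injective hi
    have hsw' : Summable fun j : ℤ => w (j + 1) := by
      have hi : Function.Injective fun j : ℤ => j + 1 := fun x y hxy => by simpa using hxy
      exact hsw.comp_injective hi
    have hvt : (∑' j : ℤ, v (j - 1)) = ∑' j, v j := by
      simpa using (Equiv.subRight (1:ℤ)).tsum_eq v
    have hwt : (∑' j : ℤ, w (j + 1)) = ∑' j, w j := by
      simpa using (Equiv.addRight (1:ℤ)).tsum_eq w
    have hssum : Summable fun j : ℤ =>
        ∑ k ∈ Finset.range n, caputoCoeff α n k * |U k (j+1) - U k j| :=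
      summable_sum fun k _ => (hsum k).mul_left _
    calc (∑' j : ℤ, |U (n+1) (j+1) - U (n+1) j|)
        ≤ ∑' j : ℤ, ((∑ k ∈ Finset.range n, caputoCoeff α n k * |U k (j+1) - U k j|)
            + u j + v (j-1) + w (j+1)) :=
          Summable.tsum_le_tsum hbound (hsum (n+1)) (((hssum.add hsu).add hsv').add hsw')
      _ = (∑' j : ℤ, ∑ k ∈ Finset.range n, caputoCoeff α n k * |U k (j+1) - U k j|)
            + (∑' j : ℤ, u j) + (∑' j : ℤ, v (j-1)) + (∑' j : ℤ, w (j+1)) := by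
          rw [Summable.tsum_add ((hssum.add hsu).add hsv') hsw',
            Summable.tsum_add (hssum.add hsu) hsv', Summable.tsum_add hssum hsu]
      _ = (∑ k ∈ Finset.range n, caputoCoeff α n k * ∑' j : ℤ, |U k (j+1) - U k j|)
            + ((∑' j : ℤ, u j) + (∑' j : ℤ, v j) + (∑' j : ℤ, w j)) := by
          rw [hvt, hwt, Summable.tsum_finsetSum fun k _ => (hsum k).mul_left _]
          simp only [tsum_mul_left]
          ring
      _ = (∑ k ∈ Finset.range n, caputoCoeff α n k * ∑' j : ℤ, |U k (j+1) - U k j|)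
            + caputoCoeff α n n * ∑' j : ℤ, |U n (j+1) - U n j| := by
          congr 1
          rw [← Summable.tsum_add hsu hsv, ← Summable.tsum_add (hsu.add hsv) hsw, ← tsum_mul_left]
          apply tsum_congr
          intro j
          simp only [hu, hv, hw]
          ring
      _ = ∑ k ∈ Finset.range (n+1),
            caputoCoeff α n k * ∑' j : ℤ, |U k (j+1) - U k j| := by
          rw [Finset.sum_range_succ]
  -- conclude by strong induction
  intro n
  induction n using Nat.strong_induction_on with
  | _ n ih =>
    cases n with
    | zero => exact le_rfl
    | succ m =>
      calc (∑' j : ℤ, |U (m+1) (j+1) - U (m+1) j|)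
          ≤ ∑ k ∈ Finset.range (m+1),
              caputoCoeff α m k * ∑' j : ℤ, |U k (j+1) - U k j| := key m
        _ ≤ ∑ k ∈ Finset.range (m+1),
              caputoCoeff α m k * ∑' j : ℤ, |U 0 (j+1) - U 0 j| := by
            apply Finset.sum_le_sum
            intro k hk
            exact mul_le_mul_of_nonneg_left (ih k (Finset.mem_range.1 hk))
              (caputo_nonneg_aux hα0 hα1 (Nat.lt_succ_iff.1 (Finset.mem_range.1 hk)))
        _ = ∑' j : ℤ, |U 0 (j+1) - U 0 j| := by
            rw [← Finset.sum_mul, caputo_sum_aux hα1 m, one_mul]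
end

section
/- Suppose (U^n) solves the implicit upwind scheme for linear advection with λ > 0, and fix n ∈ ℕ. Assume that for each 0 ≤ k ≤ n+1 the sequence j ↦ (U^k_j)² is summable over ℤ. Then the energy identity holds: Σ_{j∈ℤ} (U^{n+1}_j)² + Σ_{k=0}^{n} c^{n+1}_k Σ_{j∈ℤ} (U^{n+1}_j − U^k_j)² + λ Σ_{j∈ℤ} (U^{n+1}_j − U^{n+1}_{j−1})² = Σ_{k=0}^{n} c^{n+1}_k Σ_{j∈ℤ} (U^k_j)². -/
open scoped BigOperators

/-- `U` solves the implicit upwind scheme for the linear advection equation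
with flux `f(u) = a u`, `a > 0`, where `lam = a τ^α / (h Γ(2-α))`. -/
def SolvesImplicitAdvection (α lam : ℝ) (U : ℕ → ℤ → ℝ) : Prop :=
  ∀ (n : ℕ) (j : ℤ),
    U (n + 1) j = (∑ k ∈ Finset.range (n + 1), caputoCoeff α n k * U k j)
      - lam * (U (n + 1) j - U (n + 1) (j - 1))

set_option maxHeartbeats 1000000 in
/-- energy identity for the implicit upwind scheme for linear advection:
`Σ_j (U^{n+1}_j)² + Σ_k c^{n+1}_k Σ_j (U^{n+1}_j - U^k_j)²
  + λ Σ_j (U^{n+1}_j - U^{n+1}_{j-1})² = Σ_k c^{n+1}_k Σ_j (U^k_j)²`. -/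
theorem implicit_advection_energy_identity (α τ h a : ℝ)
    (hα : α ∈ Set.Ioo (0 : ℝ) 1) (hτ : 0 < τ) (hh : 0 < h) (ha : 0 < a)
    (lam : ℝ) (hlam : lam = a * τ ^ α / (h * Real.Gamma (2 - α)))
    (U : ℕ → ℤ → ℝ) (hU : SolvesImplicitAdvection α lam U)
    (n : ℕ) (hsum : ∀ k ≤ n + 1, Summable (fun j : ℤ => (U k j) ^ 2)) :
    (∑' j : ℤ, (U (n + 1) j) ^ 2)
      + (∑ k ∈ Finset.range (n + 1), caputoCoeff α n k
          * ∑' j : ℤ, (U (n + 1) j - U k j) ^ 2)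
      + lam * ∑' j : ℤ, (U (n + 1) j - U (n + 1) (j - 1)) ^ 2
    = ∑ k ∈ Finset.range (n + 1), caputoCoeff α n k * ∑' j : ℤ, (U k j) ^ 2 := by
  obtain ⟨hα0, hα1⟩ := hα
  have hβ : (0:ℝ) < 1 - α := by linarith
  -- telescoping: Σ c_k = 1
  have hcsum : ∑ k ∈ Finset.range (n+1), caputoCoeff α n k = 1 := by
    set G : ℕ → ℝ := fun m => ((n:ℝ)+1-(m:ℝ))^(1-α) - ((n:ℝ)-(m:ℝ))^(1-α) with hGdef
    have hg : ∀ k : ℕ, caputoCoeff α n (k+1) = G (k+1) - G k := by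
      intro k
      simp only [caputoCoeff, Nat.succ_ne_zero, if_false, hGdef]
      push_cast
      have e1 : (n:ℝ) + 2 - ((k:ℝ)+1) = (n:ℝ) + 1 - (k:ℝ) := by ring
      have e2 : (n:ℝ) + 1 - ((k:ℝ)+1) = (n:ℝ) - (k:ℝ) := by ring
      rw [e1, e2]; ring
    rw [Finset.sum_range_succ', Finset.sum_congr rfl (fun k _ => hg k),
      Finset.sum_range_sub]
    have h0 : caputoCoeff α n 0 = G 0 := by
      simp [caputoCoeff, hGdef]
    have hn : G n = 1 := by
      simp only [hGdef]
      rw [show (n:ℝ)+1-(n:ℝ) = 1 by ring, show (n:ℝ)-(n:ℝ) = 0 by ring,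
        Real.one_rpow, Real.zero_rpow (by linarith : (1:ℝ) - α ≠ 0)]
      ring
    rw [h0]; linarith [hn]
  -- summability facts
  have hSnp : Summable (fun j : ℤ => (U (n+1) j)^2) := hsum _ le_rfl
  have hSshift : Summable (fun j : ℤ => (U (n+1) (j-1))^2) :=
    ((Equiv.subRight (1:ℤ)).summable_iff).2 hSnp
  have hdiff : ∀ (f g : ℤ → ℝ), Summable (fun j => (f j)^2) → Summable (fun j => (g j)^2) →
      Summable (fun j => (f j - g j)^2) := by
    intro f g hf hg
    apply Summable.of_nonneg_of_le (fun j => sq_nonneg _) (fun j => ?_)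
      ((hf.add hg).mul_left 2)
    nlinarith [sq_nonneg (f j + g j)]
  have hDk : ∀ k ∈ Finset.range (n+1), Summable (fun j : ℤ => (U (n+1) j - U k j)^2) := by
    intro k hk
    exact hdiff _ _ hSnp (hsum k (le_trans (Nat.lt_succ_iff.mp (Finset.mem_range.mp hk)) (Nat.le_succ n)))
  have hSd : Summable (fun j : ℤ => (U (n+1) j - U (n+1) (j-1))^2) :=
    hdiff _ _ hSnp hSshift
  -- pointwise identity
  have key : ∀ j : ℤ,
      (U (n+1) j)^2 + (∑ k ∈ Finset.range (n+1), caputoCoeff α n k * (U (n+1) j - U k j)^2)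
        + lam * (U (n+1) j - U (n+1) (j-1))^2
      = (∑ k ∈ Finset.range (n+1), caputoCoeff α n k * (U k j)^2)
        + lam * ((U (n+1) (j-1))^2 - (U (n+1) j)^2) := by
    intro j
    have hscheme := hU n j
    have hexp : ∑ k ∈ Finset.range (n+1), caputoCoeff α n k * (U (n+1) j - U k j)^2
        = (∑ k ∈ Finset.range (n+1), caputoCoeff α n k) * (U (n+1) j)^2
          - 2 * U (n+1) j * (∑ k ∈ Finset.range (n+1), caputoCoeff α n k * U k j)
          + ∑ k ∈ Finset.range (n+1), caputoCoeff α n k * (U k j)^2 := by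
      rw [Finset.sum_mul, Finset.mul_sum, ← Finset.sum_sub_distrib, ← Finset.sum_add_distrib]
      exact Finset.sum_congr rfl fun k _ => by ring
    rw [hexp, hcsum]
    linear_combination (2 * U (n+1) j) * hscheme
  -- sum the pointwise identity
  have hFsum : Summable (fun j : ℤ => ∑ k ∈ Finset.range (n+1),
      caputoCoeff α n k * (U (n+1) j - U k j)^2) :=
    summable_sum (fun k hk => (hDk k hk).mul_left _)
  have hGsum : Summable (fun j : ℤ => ∑ k ∈ Finset.range (n+1),
      caputoCoeff α n k * (U k j)^2) :=
    summable_sum (fun k hk => ((hsum k (le_trans (Nat.lt_succ_iff.mp (Finset.mem_range.mp hk)) (Nat.le_succ n))).mul_left _))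
  have hT : ∑' j : ℤ, ((U (n+1) j)^2 + (∑ k ∈ Finset.range (n+1), caputoCoeff α n k * (U (n+1) j - U k j)^2)
        + lam * (U (n+1) j - U (n+1) (j-1))^2)
      = ∑' j : ℤ, ((∑ k ∈ Finset.range (n+1), caputoCoeff α n k * (U k j)^2)
        + lam * ((U (n+1) (j-1))^2 - (U (n+1) j)^2)) := tsum_congr key
  rw [Summable.tsum_add (hSnp.add hFsum) (hSd.mul_left lam), Summable.tsum_add hSnp hFsum,
    Summable.tsum_finsetSum (fun k hk => (hDk k hk).mul_left _),
    Summable.tsum_add hGsum ((hSshift.sub hSnp).mul_left lam),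
    Summable.tsum_finsetSum (fun k hk => ((hsum k (le_trans (Nat.lt_succ_iff.mp (Finset.mem_range.mp hk)) (Nat.le_succ n))).mul_left _))] at hT
  have hshift : ∑' j : ℤ, (U (n+1) (j-1))^2 = ∑' j : ℤ, (U (n+1) j)^2 :=
    (Equiv.subRight (1:ℤ)).tsum_eq (fun j => (U (n+1) j)^2)
  simp only [tsum_mul_left] at hT
  rw [Summable.tsum_sub hSshift hSnp, hshift] at hT
  rw [hT]; ring
end
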